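/- arXiv:1507.00555 — 10 statements merged into one kernel-verified Lean document; each statement's English description precedes it below -/
import Mathlib

section
/- For any two unordered pairs of distinct indices {i, j} and {k, l} in Fin r with {i, j} ≠ {k, l} (so necessarily r ≥ 3), the integers N i j and N k l are coprime: gcd(N i j, N k l) = 1. -/
/-- `N i j`: the gcd (as a nonnegative integer) of the family consisting of `n k` for
`k ∉ {i, j}` together with `n i + 1` and `n j + 1`. -/
def Npair {r : ℕ} (n : Fin r → ℤ) (i j : Fin r) : ℕ :=
  Nat.gcd ((Finset.univ \ {i, j}).gcd fun k => (n k).natAbs)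
    (Nat.gcd (n i + 1).natAbs (n j + 1).natAbs)

/-- For two distinct unordered pairs `{i, j} ≠ {k, l}` of distinct indices, the integers
`N i j` and `N k l` are coprime. -/
theorem Npair_coprime {r : ℕ} (n : Fin r → ℤ) (i j k l : Fin r)
    (hij : i ≠ j) (hkl : k ≠ l) (hne : ({i, j} : Finset (Fin r)) ≠ {k, l}) :
    Nat.Coprime (Npair n i j) (Npair n k l) := by
  -- find m ∈ {k,l} with m ∉ {i,j}
  have hex : ∃ m : Fin r, (m = k ∨ m = l) ∧ m ≠ i ∧ m ≠ j := by
    by_contra h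
    push_neg at h
    have hk' := h k (Or.inl rfl)
    have hl' := h l (Or.inr rfl)
    apply hne
    have hk2 : k = i ∨ k = j := by
      by_cases hk : k = i
      exacts [Or.inl hk, Or.inr (hk' hk)]
    have hl2 : l = i ∨ l = j := by
      by_cases hl : l = i
      exacts [Or.inl hl, Or.inr (hl' hl)]
    rcases hk2 with rfl | rfl <;> rcases hl2 with rfl | rfl
    · exact absurd rfl hkl
    · rfl
    · exact Finset.pair_comm _ _
    · exact absurd rfl hkl
  obtain ⟨m, hm, hmi, hmj⟩ := hex
  set d := Nat.gcd (Npair n i j) (Npair n k l) with hd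
  have h1 : (d : ℤ) ∣ n m := by
    have hmem : m ∈ Finset.univ \ ({i, j} : Finset (Fin r)) := by
      simp [hmi, hmj]
    have : d ∣ (n m).natAbs :=
      (Nat.gcd_dvd_left _ _).trans ((Nat.gcd_dvd_left _ _).trans (Finset.gcd_dvd hmem))
    exact Int.natCast_dvd_natCast.mpr this |>.trans (Int.natAbs_dvd.mpr dvd_rfl)
  have h2 : (d : ℤ) ∣ n m + 1 := by
    have : d ∣ (n m + 1).natAbs := by
      refine (Nat.gcd_dvd_right _ _).trans ((Nat.gcd_dvd_right _ _).trans ?_)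
      rcases hm with rfl | rfl
      · exact Nat.gcd_dvd_left _ _
      · exact Nat.gcd_dvd_right _ _
    exact Int.natCast_dvd_natCast.mpr this |>.trans (Int.natAbs_dvd.mpr dvd_rfl)
  have h3 : (d : ℤ) ∣ 1 := by
    have := dvd_sub h2 h1
    simpa using this
  have : d ∣ 1 := by exact_mod_cast Int.natCast_dvd_natCast.mp (by exact_mod_cast h3)
  exact Nat.dvd_one.mp this
end

section
/- If at least three indices i ∈ Fin r satisfy that n i is odd, then N i j is odd for every pair of distinct indices i, j ∈ Fin r. -/
/-- If at least three indices `i` satisfy that `n i` is odd, then `N i j` is odd for every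
pair of distinct indices `i, j`. -/
theorem Npair_odd_of_three_odd {r : ℕ} (n : Fin r → ℤ)
    (h3 : 3 ≤ (Finset.univ.filter fun i => Odd (n i)).card)
    (i j : Fin r) (hij : i ≠ j) :
    Odd (Npair n i j) := by
  -- find an odd index k distinct from i and j
  have hcard : ({i, j} : Finset (Fin r)).card ≤ 2 := Finset.card_insert_le _ _ |>.trans (by simp)
  have hlt : ({i, j} : Finset (Fin r)).card < (Finset.univ.filter fun i => Odd (n i)).card :=
    lt_of_le_of_lt hcard (by omega)
  have hns : ¬ (Finset.univ.filter fun i => Odd (n i)) ⊆ ({i, j} : Finset (Fin r)) :=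
    fun h => absurd (Finset.card_le_card h) (by omega)
  obtain ⟨k, hk, hknot⟩ := Finset.not_subset.mp hns
  have hkodd : Odd (n k) := (Finset.mem_filter.mp hk).2
  have hkmem : k ∈ Finset.univ \ ({i, j} : Finset (Fin r)) :=
    Finset.mem_sdiff.mpr ⟨Finset.mem_univ _, hknot⟩
  have hdvd : Npair n i j ∣ (n k).natAbs :=
    (Nat.gcd_dvd_left _ _).trans (Finset.gcd_dvd hkmem)
  have hodd : Odd (n k).natAbs := Int.natAbs_odd.mpr hkodd
  exact hodd.of_dvd_nat hdvd  -- may not exist; fallback below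
end

section
/- Assume r ≥ 3, n i ≠ −1 for all i, and ∑_{i} n i = −2. Fix an index k and assume that either n k is even, or that at most one index i ≠ k has n i odd. Then the greatest common divisor of the finite family of integers consisting of 2·(n i)·(n j) for all pairs of distinct indices i, j both different from k, together with (n i)·(n i + 1) for all i ≠ k, together with n k + 1, equals ∏_{i ≠ k} N k i. -/
/-- `d k`: the gcd (as a nonnegative integer) of the family consisting of `2 * n i * n j` for
all pairs of distinct indices `i, j ≠ k`, together with `n i * (n i + 1)` for all `i ≠ k`,
together with `n k + 1`. -/
def dgcd {r : ℕ} (n : Fin r → ℤ) (k : Fin r) : ℕ :=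
  Nat.gcd
    ((((Finset.univ.erase k) ×ˢ (Finset.univ.erase k)).filter fun p => p.1 ≠ p.2).gcd
      fun p => (2 * n p.1 * n p.2).natAbs)
    (Nat.gcd ((Finset.univ.erase k).gcd fun i => (n i * (n i + 1)).natAbs)
      (n k + 1).natAbs)

/-! Each `N k i` divides `d k`, and these factors are pairwise coprime because `N k i ∣ n i + 1`
while `N k j ∣ n i`; so their product divides `d k`. Conversely, let `p ^ e ∣ d k` with `p` prime.
Then `p ∣ n k + 1`, and since `∑ n i = -2`, `p` fails to divide some `n i` with `i ≠ k`.
From `p ^ e ∣ n i (n i + 1)` we get `p ^ e ∣ n i + 1`, and for every other `l ≠ k`,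
`p ^ e ∣ n l (n l + 1)` gives `p ^ e ∣ n l` unless `p ∣ n l + 1`; in that case `p ∣ 2 n i n l`
forces `p = 2` with `n k`, `n i`, `n l` all odd, which the parity hypothesis excludes.
Hence `p ^ e ∣ N k i`. -/

section

variable {r : ℕ} (n : Fin r → ℤ)

theorem dvd_npair_iff (i j : Fin r) (m : ℤ) :
    m ∣ (Npair n i j : ℤ) ↔
      (∀ l, l ≠ i → l ≠ j → m ∣ n l) ∧ m ∣ n i + 1 ∧ m ∣ n j + 1 := by
  simp only [Int.dvd_natCast, Npair, Nat.dvd_gcd_iff, Finset.dvd_gcd_iff, Int.natAbs_dvd_natAbs,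
    Finset.mem_sdiff, Finset.mem_insert, Finset.mem_singleton, Finset.mem_univ, true_and, not_or,
    and_imp]

theorem dvd_dgcd_iff (k : Fin r) (m : ℤ) :
    m ∣ (dgcd n k : ℤ) ↔
      (∀ i j, i ≠ k → j ≠ k → i ≠ j → m ∣ 2 * n i * n j) ∧
      (∀ i, i ≠ k → m ∣ n i * (n i + 1)) ∧ m ∣ n k + 1 := by
  simp only [Int.dvd_natCast, dgcd, Nat.dvd_gcd_iff, Finset.dvd_gcd_iff, Int.natAbs_dvd_natAbs,
    Finset.mem_filter, Finset.mem_product, Finset.mem_erase, Finset.mem_univ, and_true, and_imp,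
    Prod.forall]

variable {n}

theorem npair_dvd_dgcd {k i : Fin r} (hi : i ≠ k) : (Npair n k i : ℤ) ∣ dgcd n k := by
  obtain ⟨hN, hNk, hNi⟩ := (dvd_npair_iff n k i _).mp dvd_rfl
  refine (dvd_dgcd_iff n k _).mpr ⟨fun a b ha hb hab => ?_, fun a ha => ?_, hNk⟩
  · rcases eq_or_ne a i with rfl | hai
    · exact (hN b hb (Ne.symm hab)).mul_left _
    · exact ((hN a ha hai).mul_left 2).mul_right _
  · rcases eq_or_ne a i with rfl | hai
    · exact hNi.mul_left _
    · exact (hN a ha hai).mul_right _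

theorem isCoprime_npair {k i j : Fin r} (hi : i ≠ k) (hij : i ≠ j) :
    IsCoprime (Npair n k i : ℤ) (Npair n k j) := by
  have hNi : (Npair n k i : ℤ) ∣ n i + 1 := ((dvd_npair_iff n k i _).mp dvd_rfl).2.2
  have hNj : (Npair n k j : ℤ) ∣ n i := ((dvd_npair_iff n k j _).mp dvd_rfl).1 i hi hij
  have : IsCoprime (n i + 1) (n i) := ⟨1, -1, by ring⟩
  exact (this.of_isCoprime_of_dvd_left hNi).of_isCoprime_of_dvd_right hNj

theorem prod_npair_dvd_dgcd (k : Fin r) :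
    ((∏ i ∈ Finset.univ.erase k, Npair n k i : ℕ) : ℤ) ∣ dgcd n k := by
  push_cast
  refine Finset.prod_dvd_of_coprime (fun i hi j _ hij => ?_) fun i hi => ?_
  · exact isCoprime_npair (Finset.mem_erase.mp hi).1 hij
  · exact npair_dvd_dgcd (Finset.mem_erase.mp hi).1

theorem exists_not_dvd_of_dvd_add_one (hsum : ∑ i, n i = -2) {k : Fin r} {p : ℤ}
    (hp : ¬IsUnit p) (hpk : p ∣ n k + 1) : ∃ i ≠ k, ¬p ∣ n i := by
  by_contra! h
  have hrest : p ∣ ∑ i ∈ Finset.univ.erase k, n i :=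
    Finset.dvd_sum fun i hi => h i (Finset.mem_erase.mp hi).1
  rw [← Finset.add_sum_erase _ _ (Finset.mem_univ k)] at hsum
  rw [show ∑ i ∈ Finset.univ.erase k, n i = -2 - n k by linarith] at hrest
  have hp1 : p ∣ -1 := by
    rw [show (-1 : ℤ) = -2 - n k + (n k + 1) by ring]
    exact dvd_add hrest hpk
  exact hp (isUnit_of_dvd_one (dvd_neg.mp hp1))

theorem eq_of_odd_of_odd {k : Fin r}
    (hk : (Finset.univ.filter fun i => i ≠ k ∧ Odd (n i)).card ≤ 1) {i j : Fin r}
    (hi : i ≠ k) (hj : j ≠ k) (hoi : Odd (n i)) (hoj : Odd (n j)) : i = j :=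
  Finset.card_le_one.mp hk i (by simp [hi, hoi]) j (by simp [hj, hoj])

theorem prime_pow_dvd_npair_of_dvd_dgcd (hsum : ∑ i, n i = -2) {k : Fin r}
    (hk : Even (n k) ∨ ((Finset.univ.filter fun i => i ≠ k ∧ Odd (n i)).card ≤ 1))
    {p e : ℕ} (hp : p.Prime) (he : e ≠ 0) (hd : (p : ℤ) ^ e ∣ dgcd n k) :
    ∃ i ≠ k, (p : ℤ) ^ e ∣ Npair n k i := by
  have hpZ : Prime (p : ℤ) := Nat.prime_iff_prime_int.mp hp
  obtain ⟨hpair, hsq, hk1⟩ := (dvd_dgcd_iff n k _).mp hd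
  have hpk : (p : ℤ) ∣ n k + 1 := (dvd_pow_self _ he).trans hk1
  obtain ⟨i, hik, hpi⟩ := exists_not_dvd_of_dvd_add_one hsum hpZ.not_isUnit hpk
  refine ⟨i, hik, (dvd_npair_iff n k i _).mpr
    ⟨fun l hlk hli => ?_, hk1, hpZ.pow_dvd_of_dvd_mul_left e hpi (hsq i hik)⟩⟩
  refine hpZ.pow_dvd_of_dvd_mul_right e (fun hpl => ?_) (hsq l hlk)
  have hpl' : ¬(p : ℤ) ∣ n l := fun h =>
    hpZ.not_isUnit (isUnit_of_dvd_one (by simpa using dvd_sub hpl h))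
  have hp2 : (p : ℤ) ∣ 2 := by
    rcases hpZ.dvd_or_dvd ((dvd_pow_self _ he).trans (hpair i l hik hlk (Ne.symm hli))) with h | h
    · exact (hpZ.dvd_or_dvd h).resolve_right hpi
    · exact absurd h hpl'
  obtain rfl : p = 2 := (Nat.prime_dvd_prime_iff_eq hp Nat.prime_two).mp (by exact_mod_cast hp2)
  push_cast at hpk hpi hpl'
  have hk_odd : ¬Even (n k) := Int.even_add_one.mp (even_iff_two_dvd.mpr hpk)
  exact hli (eq_of_odd_of_odd (hk.resolve_left hk_odd) hlk hik
    (Int.not_even_iff_odd.mp (mt even_iff_two_dvd.mp hpl'))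
    (Int.not_even_iff_odd.mp (mt even_iff_two_dvd.mp hpi)))

end

theorem dgcd_eq_prod_general {r : ℕ} (n : Fin r → ℤ) (hsum : ∑ i, n i = -2) (k : Fin r)
    (hk : Even (n k) ∨ ((Finset.univ.filter fun i => i ≠ k ∧ Odd (n i)).card ≤ 1)) :
    dgcd n k = ∏ i ∈ Finset.univ.erase k, Npair n k i := by
  refine Nat.dvd_antisymm ((Nat.dvd_iff_prime_pow_dvd_dvd _ _).mpr fun p e hp hd => ?_)
    (Int.natCast_dvd_natCast.mp (prod_npair_dvd_dgcd k))
  rcases eq_or_ne e 0 with rfl | he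
  · simp
  obtain ⟨i, hik, hi⟩ := prime_pow_dvd_npair_of_dvd_dgcd hsum hk hp he (by exact_mod_cast hd)
  exact (Int.natCast_dvd_natCast.mp (by exact_mod_cast hi)).trans
    (Finset.dvd_prod_of_mem _ (by simp [hik]))

/-- If `r ≥ 3`, no `n i` equals `-1`, `∑ n i = -2`, and either `n k` is even or at most one
index `i ≠ k` has `n i` odd, then `d k = ∏_{i ≠ k} N k i`. -/
theorem dgcd_eq_prod {r : ℕ} (hr : 3 ≤ r) (n : Fin r → ℤ)
    (hn : ∀ i, n i ≠ -1) (hsum : ∑ i, n i = -2) (k : Fin r)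
    (hk : Even (n k) ∨ ((Finset.univ.filter fun i => i ≠ k ∧ Odd (n i)).card ≤ 1)) :
    dgcd n k = ∏ i ∈ Finset.univ.erase k, Npair n k i :=
  dgcd_eq_prod_general n hsum k hk
end

section
/- Assume r ≥ 3, n i ≠ −1 for all i, and ∑_{i} n i = −2. Fix an index k and assume that n k is odd and that at least two indices i ≠ k have n i odd. Then the greatest common divisor of the finite family of integers consisting of 2·(n i)·(n j) for all pairs of distinct indices i, j both different from k, together with (n i)·(n i + 1) for all i ≠ k, together with n k + 1, equals 2·∏_{i ≠ k} N k i. -/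
lemma natdvd_iff (a : ℕ) (x : ℤ) : a ∣ x.natAbs ↔ (a : ℤ) ∣ x := by
  rw [← Int.natCast_dvd_natCast, Int.dvd_natAbs]

lemma prod_dvd_of_pairwise_coprime {ι : Type*} {s : Finset ι} {f : ι → ℕ} {m : ℕ}
    (h : ∀ i ∈ s, ∀ j ∈ s, i ≠ j → Nat.Coprime (f i) (f j))
    (hd : ∀ i ∈ s, f i ∣ m) : (∏ i ∈ s, f i) ∣ m := by
  classical
  induction s using Finset.induction with
  | empty => simp
  | @insert a s ha ih =>
    rw [Finset.prod_insert ha]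
    refine Nat.Coprime.mul_dvd_of_dvd_of_dvd ?_ (hd a (by simp)) (ih ?_ ?_)
    · rw [Nat.coprime_prod_right_iff]
      intro j hj
      exact h a (by simp) j (by simp [hj]) (by rintro rfl; exact ha hj)
    · intro i hi j hj hij
      exact h i (by simp [hi]) j (by simp [hj]) hij
    · intro i hi; exact hd i (by simp [hi])

section
variable {r : ℕ} (n : Fin r → ℤ) (k : Fin r)

lemma dgcd_dvd_nk1 : (dgcd n k : ℤ) ∣ n k + 1 := by
  rw [← natdvd_iff]
  exact ((Nat.gcd_dvd_right _ _).trans (Nat.gcd_dvd_right _ _))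

lemma dgcd_dvd_sq {i : Fin r} (hi : i ≠ k) : (dgcd n k : ℤ) ∣ n i * (n i + 1) := by
  rw [← natdvd_iff]
  refine ((Nat.gcd_dvd_right _ _).trans ((Nat.gcd_dvd_left _ _).trans ?_))
  exact Finset.gcd_dvd (by simp [hi])

lemma dgcd_dvd_two_mul {i j : Fin r} (hi : i ≠ k) (hj : j ≠ k) (hij : i ≠ j) :
    (dgcd n k : ℤ) ∣ 2 * n i * n j := by
  rw [← natdvd_iff]
  refine (Nat.gcd_dvd_left _ _).trans
    (Finset.gcd_dvd (b := ((i, j) : Fin r × Fin r)) ?_)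
  refine Finset.mem_filter.mpr ⟨Finset.mem_product.mpr ⟨?_, ?_⟩, hij⟩
  · exact Finset.mem_erase.mpr ⟨hi, Finset.mem_univ _⟩
  · exact Finset.mem_erase.mpr ⟨hj, Finset.mem_univ _⟩

lemma Npair_dvd_nk1 (i : Fin r) : (Npair n k i : ℤ) ∣ n k + 1 := by
  rw [← natdvd_iff]
  exact (Nat.gcd_dvd_right _ _).trans (Nat.gcd_dvd_left _ _)

lemma Npair_dvd_ni1 (i : Fin r) : (Npair n k i : ℤ) ∣ n i + 1 := by
  rw [← natdvd_iff]
  exact (Nat.gcd_dvd_right _ _).trans (Nat.gcd_dvd_right _ _)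

lemma Npair_dvd_nj {i j : Fin r} (hjk : j ≠ k) (hji : j ≠ i) : (Npair n k i : ℤ) ∣ n j := by
  rw [← natdvd_iff]
  exact (Nat.gcd_dvd_left _ _).trans (Finset.gcd_dvd (by simp [hjk, hji]))

end

/-- If `r ≥ 3`, no `n i` equals `-1`, `∑ n i = -2`, `n k` is odd and at least two indices
`i ≠ k` have `n i` odd, then `d k = 2 * ∏_{i ≠ k} N k i`. -/
theorem dgcd_eq_two_mul_prod {r : ℕ} (hr : 3 ≤ r) (n : Fin r → ℤ)
    (hn : ∀ i, n i ≠ -1) (hsum : ∑ i, n i = -2) (k : Fin r)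
    (hk : Odd (n k) ∧ 2 ≤ (Finset.univ.filter fun i => i ≠ k ∧ Odd (n i)).card) :
    dgcd n k = 2 * ∏ i ∈ Finset.univ.erase k, Npair n k i := by
  classical
  obtain ⟨hkodd, hcard⟩ := hk
  set E := Finset.univ.erase k with hE
  obtain ⟨a, ha, b, hb, hab⟩ := Finset.one_lt_card.mp hcard
  rw [Finset.mem_filter] at ha hb
  obtain ⟨-, hak, haodd⟩ := ha
  obtain ⟨-, hbk, hbodd⟩ := hb
  have hnk1 : n k + 1 ≠ 0 := fun h => hn k (by linarith)
  have hdne : dgcd n k ≠ 0 := by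
    intro h
    have := dgcd_dvd_nk1 n k
    rw [h] at this
    exact hnk1 (zero_dvd_iff.mp (by exact_mod_cast this))
  have hNodd : ∀ i ∈ E, ¬ (2 ∣ Npair n k i) := by
    intro i _ h2
    have hex : ∃ j, j ≠ k ∧ j ≠ i ∧ Odd (n j) := by
      rcases eq_or_ne a i with rfl | hai
      · exact ⟨b, hbk, fun h => hab (by rw [h]), hbodd⟩
      · exact ⟨a, hak, hai, haodd⟩
    obtain ⟨j, hjk, hji, hjodd⟩ := hex
    have h3 : (2 : ℤ) ∣ n j := by
      exact_mod_cast (Int.natCast_dvd_natCast.mpr h2).trans (Npair_dvd_nj n k hjk hji)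
    obtain ⟨c, hc⟩ := h3
    exact (Int.not_even_iff_odd.mpr hjodd) ⟨c, by linarith⟩
  have hNne : ∀ i ∈ E, Npair n k i ≠ 0 := by
    intro i _ h
    have := Npair_dvd_nk1 n k i
    rw [h] at this
    exact hnk1 (zero_dvd_iff.mp (by exact_mod_cast this))
  have hcop : ∀ i ∈ E, ∀ j ∈ E, i ≠ j → Nat.Coprime (Npair n k i) (Npair n k j) := by
    intro i hi j hj hij
    have h1 : (Nat.gcd (Npair n k i) (Npair n k j) : ℤ) ∣ n i + 1 :=
      (Int.natCast_dvd_natCast.mpr (Nat.gcd_dvd_left _ _)).trans (Npair_dvd_ni1 n k i)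
    have h2 : (Nat.gcd (Npair n k i) (Npair n k j) : ℤ) ∣ n i :=
      (Int.natCast_dvd_natCast.mpr (Nat.gcd_dvd_right _ _)).trans
        (Npair_dvd_nj n k (Finset.mem_erase.mp hi).1 hij)
    have h3 : (Nat.gcd (Npair n k i) (Npair n k j) : ℤ) ∣ 1 := by
      have := dvd_sub h1 h2; simpa using this
    have := Int.eq_one_of_dvd_one (by positivity) h3
    exact_mod_cast this
  -- 2 ∣ d
  have hd2 : 2 ∣ dgcd n k := by
    have hk2 : (2 : ℤ) ∣ n k + 1 := by
      rcases hkodd with ⟨m, hm⟩; exact ⟨m + 1, by linarith⟩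
    rw [dgcd]
    refine Nat.dvd_gcd ?_ (Nat.dvd_gcd ?_ ?_)
    · refine Finset.dvd_gcd ?_
      rintro ⟨i, j⟩ -
      rw [natdvd_iff]; push_cast
      exact ⟨n i * n j, by ring⟩
    · refine Finset.dvd_gcd ?_
      intro i _
      rw [natdvd_iff]; push_cast
      exact (Int.even_mul_succ_self (n i)).two_dvd
    · rw [natdvd_iff]; push_cast; exact hk2
  have hNd : ∀ i ∈ E, Npair n k i ∣ dgcd n k := by
    intro i hi
    have hik : i ≠ k := (Finset.mem_erase.mp hi).1
    rw [dgcd]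
    refine Nat.dvd_gcd ?_ (Nat.dvd_gcd ?_ ?_)
    · refine Finset.dvd_gcd ?_
      rintro ⟨x, y⟩ hxy
      simp only [Finset.mem_filter, Finset.mem_product, Finset.mem_erase] at hxy
      obtain ⟨⟨⟨hxk, -⟩, ⟨hyk, -⟩⟩, hxy⟩ := hxy
      rw [natdvd_iff]
      rcases eq_or_ne x i with rfl | hxi
      · exact Dvd.dvd.mul_left (Npair_dvd_nj n k hyk (fun h => hxy h.symm)) _
      · exact Dvd.dvd.mul_right ((Npair_dvd_nj n k hxk hxi).mul_left 2) _
    · refine Finset.dvd_gcd ?_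
      intro x hx
      have hxk : x ≠ k := (Finset.mem_erase.mp hx).1
      rw [natdvd_iff]
      rcases eq_or_ne x i with rfl | hxi
      · exact Dvd.dvd.mul_left (Npair_dvd_ni1 n k x) _
      · exact Dvd.dvd.mul_right (Npair_dvd_nj n k hxk hxi) _
    · rw [natdvd_iff]; exact Npair_dvd_nk1 n k i
  have hdir1 : 2 * (∏ i ∈ E, Npair n k i) ∣ dgcd n k := by
    refine Nat.Coprime.mul_dvd_of_dvd_of_dvd ?_ hd2 (prod_dvd_of_pairwise_coprime hcop hNd)
    rw [Nat.coprime_prod_right_iff]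
    intro j hj
    exact (Nat.coprime_two_left).mpr
      (Nat.not_even_iff_odd.mp (fun h => hNodd j hj (by obtain ⟨c, hc⟩ := h; exact ⟨c, by omega⟩)))
  have hPne : (2 * ∏ i ∈ E, Npair n k i) ≠ 0 :=
    Nat.mul_ne_zero two_ne_zero (Finset.prod_ne_zero_iff.mpr hNne)
  have hdir2 : dgcd n k ∣ 2 * ∏ i ∈ E, Npair n k i := by
    rw [← Nat.factorization_le_iff_dvd hdne hPne]
    intro p
    by_cases hp : p.Prime
    swap
    · simp [Nat.factorization_eq_zero_of_not_prime _ hp]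
    set e := (dgcd n k).factorization p with he
    rcases Nat.eq_zero_or_pos e with he0 | hepos
    · simp [he0]
    have hpe : p ^ e ∣ dgcd n k := Nat.ordProj_dvd _ _
    have hpeZ : ((p : ℤ)) ^ e ∣ (dgcd n k : ℤ) := by exact_mod_cast hpe
    have hpZ : (p : ℤ) ∣ (dgcd n k : ℤ) := by
      exact_mod_cast Int.natCast_dvd_natCast.mpr ((dvd_pow_self p hepos.ne').trans hpe)
    rcases eq_or_ne p 2 with rfl | hp2
    · -- p = 2 : e ≤ 1
      have h1 : e ≤ 1 := by
        by_contra h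
        push_neg at h
        have h4 : (4 : ℤ) ∣ 2 * n a * n b := by
          have : ((2:ℤ)) ^ 2 ∣ ((2:ℤ)) ^ e := pow_dvd_pow _ h
          have := (this.trans hpeZ).trans (dgcd_dvd_two_mul n k hak hbk hab)
          simpa [show ((2:ℤ))^2 = 4 by norm_num] using this
        obtain ⟨c, hc⟩ := h4
        have h2ab : (2 : ℤ) ∣ n a * n b := ⟨c, by linarith⟩
        obtain ⟨c', hc'⟩ := h2ab
        have hev2 : Even (n a * n b) := ⟨c', by linarith⟩
        rcases Int.even_mul.mp hev2 with hev | hev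
        · exact (Int.not_even_iff_odd.mpr haodd) hev
        · exact (Int.not_even_iff_odd.mpr hbodd) hev
      refine le_trans h1 ?_
      exact (hp.pow_dvd_iff_le_factorization hPne).mp (by simpa using dvd_mul_right 2 _)
    · -- p odd
      have hpZprime : Prime (p : ℤ) := Nat.prime_iff_prime_int.mp hp
      -- there exists i₀ ∈ E with p ∤ n i₀
      have hex : ∃ i₀ ∈ E, ¬ (p : ℤ) ∣ n i₀ := by
        by_contra h
        push_neg at h
        have hsE : (p : ℤ) ∣ ∑ i ∈ E, n i := Finset.dvd_sum h
        have hEsum : ∑ i ∈ E, n i = -2 - n k := by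
          have := Finset.add_sum_erase Finset.univ n (Finset.mem_univ k)
          rw [hsum] at this
          rw [hE]; linarith
        have hk1 : (p : ℤ) ∣ n k + 1 := hpZ.trans (dgcd_dvd_nk1 n k)
        have hneg : (p : ℤ) ∣ (-1 : ℤ) := by
          have h' := dvd_add (hEsum ▸ hsE) hk1
          have heq : (-2 - n k) + (n k + 1) = (-1 : ℤ) := by ring
          rwa [heq] at h'
        have : (p : ℤ) ∣ 1 := dvd_neg.mp (by simpa using hneg)
        have := Int.eq_one_of_dvd_one (by positivity) this
        exact hp.one_lt.ne' (by exact_mod_cast this)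
      obtain ⟨i₀, hi₀E, hpi₀⟩ := hex
      have hi₀k : i₀ ≠ k := (Finset.mem_erase.mp hi₀E).1
      -- p divides n j for all j ∈ E, j ≠ i₀
      have hpj : ∀ j, j ≠ k → j ≠ i₀ → (p : ℤ) ∣ n j := by
        intro j hjk hji₀
        have hd := hpZ.trans (dgcd_dvd_two_mul n k hi₀k hjk (fun h => hji₀ h.symm))
        rcases (hpZprime.dvd_mul.mp hd) with h | h
        · rcases hpZprime.dvd_mul.mp h with h | h
          · exfalso
            have : p ∣ 2 := by exact_mod_cast Int.dvd_natAbs.mpr h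
            exact hp2 ((Nat.prime_dvd_prime_iff_eq hp Nat.prime_two).mp this)
          · exact absurd h hpi₀
        · exact h
      -- coprimality helpers
      have hcopi₀ : Nat.Coprime (p ^ e) (n i₀).natAbs := by
        refine Nat.Coprime.pow_left _ ((hp.coprime_iff_not_dvd).mpr ?_)
        intro h
        exact hpi₀ ((natdvd_iff _ _).mp h)
      -- p^e ∣ n i₀ + 1
      have hdvd1 : p ^ e ∣ (n i₀ + 1).natAbs := by
        have hsq : p ^ e ∣ (n i₀).natAbs * (n i₀ + 1).natAbs := by
          rw [← Int.natAbs_mul, natdvd_iff]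
          push_cast
          exact hpeZ.trans (dgcd_dvd_sq n k hi₀k)
        exact hcopi₀.dvd_of_dvd_mul_left hsq
      -- p^e ∣ n j for j ∈ E, j ≠ i₀
      have hdvdj : ∀ j, j ≠ k → j ≠ i₀ → p ^ e ∣ (n j).natAbs := by
        intro j hjk hji₀
        have hpnj := hpj j hjk hji₀
        have hcopj : Nat.Coprime (p ^ e) (n j + 1).natAbs := by
          refine Nat.Coprime.pow_left _ ((hp.coprime_iff_not_dvd).mpr ?_)
          intro h
          have h' : (p : ℤ) ∣ n j + 1 := (natdvd_iff _ _).mp h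
          have : (p : ℤ) ∣ 1 := by
            have := dvd_sub h' hpnj; simpa using this
          have := Int.eq_one_of_dvd_one (by positivity) this
          exact hp.one_lt.ne' (by exact_mod_cast this)
        have hsq : p ^ e ∣ (n j).natAbs * (n j + 1).natAbs := by
          rw [← Int.natAbs_mul, natdvd_iff]
          push_cast
          exact hpeZ.trans (dgcd_dvd_sq n k hjk)
        exact hcopj.dvd_of_dvd_mul_right hsq
      -- p^e ∣ n k + 1
      have hdvdk : p ^ e ∣ (n k + 1).natAbs := by
        rw [natdvd_iff]; push_cast
        exact hpeZ.trans (dgcd_dvd_nk1 n k)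
      -- p^e ∣ Npair n k i₀
      have hNdvd : p ^ e ∣ Npair n k i₀ := by
        rw [Npair]
        refine Nat.dvd_gcd (Finset.dvd_gcd ?_) (Nat.dvd_gcd hdvdk hdvd1)
        intro j hj
        simp only [Finset.mem_sdiff, Finset.mem_univ, Finset.mem_insert,
          Finset.mem_singleton, true_and] at hj
        push_neg at hj
        exact hdvdj j hj.1 hj.2
      have : p ^ e ∣ 2 * ∏ i ∈ E, Npair n k i :=
        (hNdvd.trans (Finset.dvd_prod_of_mem _ hi₀E)).mul_left 2
      exact (hp.pow_dvd_iff_le_factorization hPne).mp this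
  exact Nat.dvd_antisymm hdir2 hdir1
end

section
/- Assume r ≥ 3. For all pairwise distinct indices i, j, k ∈ Fin r, the elements ((n i)·(n i + 1)) • e k and (2·(n i)·(n j)) • e k of G belong to the subgroup H. -/
/-- The element `m • e i` of `G = ∏_{j} ZMod |n j + 1|`: the `i`-th coordinate is the image
of `m` in `ZMod |n i + 1|`, and all other coordinates are `0`. -/
def esingle {r : ℕ} (n : Fin r → ℤ) (i : Fin r) (m : ℤ) :
    (j : Fin r) → ZMod ((n j + 1).natAbs) :=
  Pi.single i (m : ZMod ((n i + 1).natAbs))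

/-- `τ i j = (n j) • e i + (n i) • e j`. -/
def tau {r : ℕ} (n : Fin r → ℤ) (i j : Fin r) : (k : Fin r) → ZMod ((n k + 1).natAbs) :=
  esingle n i (n j) + esingle n j (n i)

/-- `H`: the subgroup of `G` generated by the elements `τ i j` over all pairs `i ≠ j`. -/
def Hsub {r : ℕ} (n : Fin r → ℤ) : AddSubgroup ((k : Fin r) → ZMod ((n k + 1).natAbs)) :=
  AddSubgroup.closure {x | ∃ i j, i ≠ j ∧ x = tau n i j}

lemma zsmul_esingle {r : ℕ} (n : Fin r → ℤ) (i : Fin r) (a m : ℤ) :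
    a • esingle n i m = esingle n i (a * m) := by
  funext l
  by_cases h : l = i
  · subst h
    simp only [esingle, Pi.smul_apply, Pi.single_eq_same, zsmul_eq_mul]
    push_cast
    ring
  · simp [esingle, Pi.single_eq_of_ne h]

lemma esingle_add {r : ℕ} (n : Fin r → ℤ) (i : Fin r) (a b : ℤ) :
    esingle n i (a + b) = esingle n i a + esingle n i b := by
  unfold esingle
  push_cast
  rw [Pi.single_add]

lemma esingle_mul_self {r : ℕ} (n : Fin r → ℤ) (i : Fin r) (m : ℤ) :
    esingle n i ((n i + 1) * m) = 0 := by
  unfold esingle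
  have : (((n i + 1) * m : ℤ) : ZMod ((n i + 1).natAbs)) = 0 := by
    rw [ZMod.intCast_zmod_eq_zero_iff_dvd]
    exact Dvd.dvd.mul_right (Int.natAbs_dvd.mpr dvd_rfl) m
  rw [this, Pi.single_zero]

lemma tau_mem {r : ℕ} (n : Fin r → ℤ) {i j : Fin r} (h : i ≠ j) :
    tau n i j ∈ Hsub n :=
  AddSubgroup.subset_closure ⟨i, j, h, rfl⟩

/-- For pairwise distinct `i, j, k`, the elements `(n i * (n i + 1)) • e k` and
`(2 * n i * n j) • e k` belong to `H`. -/
theorem smul_esingle_mem_Hsub {r : ℕ} (hr : 3 ≤ r) (n : Fin r → ℤ)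
    (i j k : Fin r) (hij : i ≠ j) (hik : i ≠ k) (hjk : j ≠ k) :
    esingle n k (n i * (n i + 1)) ∈ Hsub n ∧ esingle n k (2 * n i * n j) ∈ Hsub n := by
  constructor
  · have h1 : esingle n k (n i * (n i + 1)) = (n i + 1) • tau n i k := by
      rw [tau, smul_add, zsmul_esingle, zsmul_esingle, esingle_mul_self, zero_add]
      ring_nf
    rw [h1]
    exact zsmul_mem (tau_mem n hik) _
  · have h2 : esingle n k (2 * n i * n j) =
        n i • tau n j k + n j • tau n i k - n k • tau n i j := by
      simp only [tau, smul_add, zsmul_esingle]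
      rw [show (2 : ℤ) * n i * n j = n i * n j + n j * n i by ring, esingle_add,
        mul_comm (n k) (n j), mul_comm (n k) (n i)]
      abel
    rw [h2]
    exact sub_mem (add_mem (zsmul_mem (tau_mem n hjk) _) (zsmul_mem (tau_mem n hik) _))
      (zsmul_mem (tau_mem n hij) _)
end

section
/- Assume r ≥ 3, n i ≠ −1 for all i, and ∑_{i} n i = −2. For each index k ∈ Fin r, the element (ε k · ∏_{i ≠ k} N k i) • e k of G belongs to the subgroup H, where ε k = 2 if n k is odd and at least two indices i ≠ k have n i odd, and ε k = 1 otherwise. -/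
/-- `ε k = 2` if `n k` is odd and at least two indices `i ≠ k` have `n i` odd, and
`ε k = 1` otherwise. -/
def eps {r : ℕ} (n : Fin r → ℤ) (k : Fin r) : ℕ :=
  if Odd (n k) ∧ 2 ≤ (Finset.univ.filter fun i => i ≠ k ∧ Odd (n i)).card then 2 else 1

section Aux

variable {r : ℕ}

lemma prime_pow_key (n : Fin r → ℤ)
    (hsum : ∑ i, n i = -2) (k : Fin r) (p a : ℕ) (hp : p.Prime)
    (h1 : (p : ℤ)^a ∣ n k + 1)
    (h2 : ∀ i, i ≠ k → (p : ℤ)^a ∣ n i * (n i + 1))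
    (h3 : ∀ i j, i ≠ k → j ≠ k → i ≠ j → (p : ℤ)^a ∣ 2 * n i * n j) :
    (p : ℤ)^a ∣ ((eps n k * ∏ i ∈ Finset.univ.erase k, Npair n k i : ℕ) : ℤ) := by
  rcases Nat.eq_zero_or_pos a with ha | ha
  · simp [ha]
  have hpz : Prime (p : ℤ) := Nat.prime_iff_prime_int.mp hp
  have hpd1 : (p : ℤ) ∣ n k + 1 := dvd_trans (dvd_pow_self _ ha.ne') h1
  have hsum' : n k + ∑ i ∈ Finset.univ.erase k, n i = -2 := by
    rw [Finset.add_sum_erase _ _ (Finset.mem_univ k)]; exact hsum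
  by_cases hex : ∃ i0, i0 ≠ k ∧ ¬ (p : ℤ) ∣ n i0
  · obtain ⟨i0, hi0k, hi0⟩ := hex
    by_cases hex2 : ∃ j, j ≠ k ∧ j ≠ i0 ∧ ¬ (p : ℤ) ∣ n j
    · -- two indices not divisible: p = 2, a = 1, eps = 2
      obtain ⟨j, hjk, hji, hj⟩ := hex2
      have hcop : IsCoprime ((p:ℤ)^a) (n i0 * n j) :=
        ((hpz.coprime_iff_not_dvd.mpr hi0).mul_right
          (hpz.coprime_iff_not_dvd.mpr hj)).pow_left
      have hd2 : (p : ℤ)^a ∣ 2 := by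
        have := h3 i0 j hi0k hjk (by rintro rfl; exact hji rfl)
        exact hcop.dvd_of_dvd_mul_right (by rw [mul_assoc] at this; exact this)
      have hd2' : p ^ a ∣ 2 := by
        have := Int.natCast_dvd_natCast.mp (by exact_mod_cast hd2)
        exact this
      have hpeq : p = 2 := by
        have : p ∣ 2 := dvd_trans (dvd_pow_self _ ha.ne') hd2'
        exact (Nat.prime_dvd_prime_iff_eq hp Nat.prime_two).mp this
      have ha1 : a = 1 := by
        subst hpeq
        have h2a : 2 ^ a ≤ 2 := Nat.le_of_dvd (by norm_num) hd2'
        have : a ≤ 1 := by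
          by_contra h
          have : 2 ^ 2 ≤ 2 ^ a := Nat.pow_le_pow_right (by norm_num) (by omega)
          omega
        omega
      have hoddk : Odd (n k) := by
        rw [← Int.not_even_iff_odd, even_iff_two_dvd]
        intro h2nk
        rw [hpeq] at hpd1
        have : (2:ℤ) ∣ 1 := by
          have := dvd_sub (by exact_mod_cast hpd1 : (2:ℤ) ∣ n k + 1) h2nk
          simpa using this
        norm_num at this
      have heps : eps n k = 2 := by
        rw [eps, if_pos]
        constructor
        · exact hoddk
        · rw [Nat.succ_le_iff, Finset.one_lt_card]
          refine ⟨i0, ?_, j, ?_, fun h => hji h.symm⟩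
          · simp only [Finset.mem_filter, Finset.mem_univ, true_and]
            exact ⟨hi0k, by rw [← Int.not_even_iff_odd, even_iff_two_dvd]; rw [hpeq] at hi0; exact_mod_cast hi0⟩
          · simp only [Finset.mem_filter, Finset.mem_univ, true_and]
            exact ⟨hjk, by rw [← Int.not_even_iff_odd, even_iff_two_dvd]; rw [hpeq] at hj; exact_mod_cast hj⟩
      rw [hpeq, ha1, heps]
      push_cast
      exact Dvd.intro _ rfl
    · -- exactly one exceptional index i0
      push_neg at hex2
      have hall : ∀ l, l ≠ k → l ≠ i0 → (p : ℤ)^a ∣ n l := by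
        intro l hlk hli
        have hpl : (p : ℤ) ∣ n l := hex2 l hlk hli
        have hnd : ¬ (p : ℤ) ∣ n l + 1 := by
          intro h
          have : (p:ℤ) ∣ 1 := by simpa using dvd_sub h hpl
          exact hpz.not_unit (isUnit_of_dvd_one this)
        have hcop : IsCoprime ((p:ℤ)^a) (n l + 1) :=
          (hpz.coprime_iff_not_dvd.mpr hnd).pow_left
        exact hcop.dvd_of_dvd_mul_right (h2 l hlk)
      have hi0mem : i0 ∈ Finset.univ.erase k := Finset.mem_erase.mpr ⟨hi0k, Finset.mem_univ _⟩
      have hsum'' : n k + (n i0 + ∑ l ∈ (Finset.univ.erase k).erase i0, n l) = -2 := by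
        rw [Finset.add_sum_erase _ _ hi0mem]; exact hsum'
      have hdi0 : (p : ℤ)^a ∣ n i0 + 1 := by
        have hds : (p : ℤ)^a ∣ ∑ l ∈ (Finset.univ.erase k).erase i0, n l := by
          refine Finset.dvd_sum fun l hl => ?_
          rw [Finset.mem_erase, Finset.mem_erase] at hl
          exact hall l hl.2.1 hl.1
        have : n i0 + 1 = -(n k + 1) - ∑ l ∈ (Finset.univ.erase k).erase i0, n l := by
          linarith [hsum'']
        rw [this]
        exact dvd_sub (dvd_neg.mpr h1) hds
      have hNd : p ^ a ∣ Npair n k i0 := by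
        refine Nat.dvd_gcd ?_ (Nat.dvd_gcd ?_ ?_)
        · refine Finset.dvd_gcd fun l hl => ?_
          rw [Finset.mem_sdiff, Finset.mem_insert, Finset.mem_singleton] at hl
          push_neg at hl
          exact Int.natCast_dvd.mp (by exact_mod_cast hall l hl.2.1 hl.2.2)
        · exact Int.natCast_dvd.mp (by exact_mod_cast h1)
        · exact Int.natCast_dvd.mp (by exact_mod_cast hdi0)
      have : p ^ a ∣ eps n k * ∏ i ∈ Finset.univ.erase k, Npair n k i :=
        Dvd.dvd.mul_left (hNd.trans (Finset.dvd_prod_of_mem _ hi0mem)) _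
      exact_mod_cast this
  · push_neg at hex
    exfalso
    have hds : (p : ℤ) ∣ ∑ l ∈ Finset.univ.erase k, n l :=
      Finset.dvd_sum fun l hl => hex l (Finset.mem_erase.mp hl).1
    have : (p : ℤ) ∣ 1 := by
      have h12 : (p:ℤ) ∣ n k + 2 := by
        have : n k + 2 = -(∑ l ∈ Finset.univ.erase k, n l) := by linarith [hsum']
        rw [this]; exact dvd_neg.mpr hds
      have := dvd_sub h12 hpd1
      simpa using this
    exact hpz.not_unit (isUnit_of_dvd_one this)

lemma arith_dvd (n : Fin r → ℤ) (hn : ∀ i, n i ≠ -1)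
    (hsum : ∑ i, n i = -2) (k : Fin r) (g : ℤ)
    (h1 : g ∣ n k + 1)
    (h2 : ∀ i, i ≠ k → g ∣ n i * (n i + 1))
    (h3 : ∀ i j, i ≠ k → j ≠ k → i ≠ j → g ∣ 2 * n i * n j) :
    g ∣ ((eps n k * ∏ i ∈ Finset.univ.erase k, Npair n k i : ℕ) : ℤ) := by
  have hM : (eps n k * ∏ i ∈ Finset.univ.erase k, Npair n k i : ℕ) ≠ 0 := by
    apply Nat.mul_ne_zero
    · rw [eps]; split <;> norm_num
    · rw [Finset.prod_ne_zero_iff]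
      intro i _
      rw [Npair]
      intro h
      rcases Nat.gcd_eq_zero_iff.mp h with ⟨-, h2'⟩
      rcases Nat.gcd_eq_zero_iff.mp h2' with ⟨hk', -⟩
      rw [Int.natAbs_eq_zero] at hk'
      exact hn k (by linarith)
  have hg0 : g ≠ 0 := by
    rintro rfl
    rw [zero_dvd_iff] at h1
    exact hn k (by linarith)
  rw [← Int.natAbs_dvd, Int.natCast_dvd_natCast,
    ← Nat.factorization_le_iff_dvd (Int.natAbs_ne_zero.mpr hg0) hM, Finsupp.le_def]
  intro p
  by_cases hp : p.Prime
  · set a := g.natAbs.factorization p with hadef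
    have hpd : (p:ℤ)^a ∣ g := by
      have h1' : ((p ^ a : ℕ) : ℤ) ∣ (g.natAbs : ℤ) :=
        Int.natCast_dvd_natCast.mpr (Nat.ordProj_dvd g.natAbs p)
      have h2' : (g.natAbs : ℤ) ∣ g := Int.natAbs_dvd.mpr dvd_rfl
      exact_mod_cast h1'.trans h2'
    have key := prime_pow_key n hsum k p a hp (hpd.trans h1)
      (fun i hi => hpd.trans (h2 i hi)) (fun i j hi hj hij => hpd.trans (h3 i j hi hj hij))
    have : p ^ a ∣ (eps n k * ∏ i ∈ Finset.univ.erase k, Npair n k i : ℕ) := by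
      exact_mod_cast key
    exact (Nat.Prime.pow_dvd_iff_le_factorization hp hM).mp this
  · simp [Nat.factorization_eq_zero_of_not_prime _ hp]

lemma esingle_nk_eq_zero (n : Fin r → ℤ) (k : Fin r) : esingle n k (n k + 1) = 0 := by
  have h : ((n k + 1 : ℤ) : ZMod ((n k + 1).natAbs)) = 0 := by
    rw [ZMod.intCast_zmod_eq_zero_iff_dvd]
    exact Int.natAbs_dvd.mpr dvd_rfl
  rw [esingle, h, Pi.single_zero]

lemma smul_tau_eq (n : Fin r → ℤ) (k i : Fin r) (hik : i ≠ k) :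
    (n i + 1) • tau n k i = esingle n k (n i * (n i + 1)) := by
  funext l
  simp only [tau, esingle, Pi.smul_apply, Pi.add_apply]
  simp only [zsmul_eq_mul]
  by_cases hlk : l = k
  · subst hlk
    rw [Pi.single_eq_same, Pi.single_eq_same, Pi.single_eq_of_ne hik.symm, add_zero]
    push_cast; ring
  · rw [Pi.single_eq_of_ne hlk, Pi.single_eq_of_ne hlk, zero_add]
    by_cases hli : l = i
    · subst hli
      rw [Pi.single_eq_same]
      have hz : ((n l + 1 : ℤ) : ZMod ((n l + 1).natAbs)) = 0 := by
        rw [ZMod.intCast_zmod_eq_zero_iff_dvd]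
        exact Int.natAbs_dvd.mpr dvd_rfl
      rw [hz, zero_mul]
    · rw [Pi.single_eq_of_ne hli, mul_zero]

lemma comb_tau_eq (n : Fin r → ℤ) (k i j : Fin r) (hik : i ≠ k) (hjk : j ≠ k) (hij : i ≠ j) :
    n j • tau n k i + n i • tau n k j - n k • tau n i j = esingle n k (2 * n i * n j) := by
  funext l
  simp only [tau, esingle, Pi.sub_apply, Pi.add_apply, Pi.smul_apply]
  simp only [zsmul_eq_mul]
  by_cases hlk : l = k
  · subst hlk
    rw [Pi.single_eq_same, Pi.single_eq_same, Pi.single_eq_same, Pi.single_eq_of_ne hik.symm,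
      Pi.single_eq_of_ne hjk.symm, Pi.single_eq_of_ne hik.symm, Pi.single_eq_of_ne hjk.symm]
    push_cast; ring
  · rw [Pi.single_eq_of_ne hlk, Pi.single_eq_of_ne hlk, Pi.single_eq_of_ne hlk]
    by_cases hli : l = i
    · subst hli
      rw [Pi.single_eq_same, Pi.single_eq_same, Pi.single_eq_of_ne hij,
        Pi.single_eq_of_ne hij]
      push_cast; ring
    · rw [Pi.single_eq_of_ne hli, Pi.single_eq_of_ne hli]
      by_cases hlj : l = j
      · subst hlj
        rw [Pi.single_eq_same, Pi.single_eq_same]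
        push_cast; ring
      · rw [Pi.single_eq_of_ne hlj, Pi.single_eq_of_ne hlj]
        push_cast; ring

lemma tau_mem_Hsub (n : Fin r → ℤ) (i j : Fin r) (h : i ≠ j) : tau n i j ∈ Hsub n :=
  AddSubgroup.subset_closure ⟨i, j, h, rfl⟩

end Aux

/-- If `r ≥ 3`, no `n i` equals `-1` and `∑ n i = -2`, then for each index `k` the element
`(ε k * ∏_{i ≠ k} N k i) • e k` belongs to `H`. -/


theorem eps_mul_prod_smul_esingle_mem_Hsub {r : ℕ} (hr : 3 ≤ r) (n : Fin r → ℤ)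
    (hn : ∀ i, n i ≠ -1) (hsum : ∑ i, n i = -2) (k : Fin r) :
    esingle n k ((eps n k * ∏ i ∈ Finset.univ.erase k, Npair n k i : ℕ) : ℤ) ∈ Hsub n := by
  classical
  set φ : ℤ →+ ((j : Fin r) → ZMod ((n j + 1).natAbs)) :=
    { toFun := fun t => esingle n k t
      map_zero' := by simp [esingle]
      map_add' := fun a b => by simp [esingle, Pi.single_add] } with hφ
  set J : AddSubgroup ℤ := (Hsub n).comap φ with hJ
  obtain ⟨g, hg⟩ := Int.subgroup_cyclic J
  have memJ : ∀ t : ℤ, t ∈ J ↔ g ∣ t := by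
    intro t
    rw [hg, AddSubgroup.mem_closure_singleton]
    constructor
    · rintro ⟨c, rfl⟩; exact Dvd.intro_left c (by rw [smul_eq_mul])
    · rintro ⟨c, rfl⟩; exact ⟨c, by rw [smul_eq_mul, mul_comm]⟩
  have h1 : g ∣ n k + 1 := by
    rw [← memJ]
    show esingle n k (n k + 1) ∈ Hsub n
    rw [esingle_nk_eq_zero]
    exact zero_mem _
  have h2 : ∀ i, i ≠ k → g ∣ n i * (n i + 1) := by
    intro i hi
    rw [← memJ]
    show esingle n k (n i * (n i + 1)) ∈ Hsub n
    rw [← smul_tau_eq n k i hi]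
    exact AddSubgroup.zsmul_mem _ (tau_mem_Hsub n k i (Ne.symm hi)) _
  have h3 : ∀ i j, i ≠ k → j ≠ k → i ≠ j → g ∣ 2 * n i * n j := by
    intro i j hik hjk hij
    rw [← memJ]
    show esingle n k (2 * n i * n j) ∈ Hsub n
    rw [← comb_tau_eq n k i j hik hjk hij]
    refine sub_mem (add_mem ?_ ?_) ?_ <;>
      exact AddSubgroup.zsmul_mem _ (tau_mem_Hsub n _ _ (by first | exact Ne.symm hik | exact Ne.symm hjk | exact hij)) _
  show (((eps n k * ∏ i ∈ Finset.univ.erase k, Npair n k i : ℕ) : ℤ)) ∈ J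
  exact (memJ _).mpr (arith_dvd n hn hsum k g h1 h2 h3)
end

section
/- Assume n i ≠ −1 for all i ∈ Fin r, and that at least three indices i satisfy that n i is odd. Then the group homomorphism from (Fin r → ℤ) to (∏_{i < j} ZMod (N i j)) × ZMod 2, which sends x to the pair consisting of the family whose (i, j)-component is the image of x i − x j in ZMod (N i j), together with the image in ZMod 2 of ∑_{i : n i odd} x i, is surjective. -/
lemma npair_dvd_natAbs {r : ℕ} (n : Fin r → ℤ) {i j k : Fin r} (hk1 : k ≠ i) (hk2 : k ≠ j) :
    Npair n i j ∣ (n k).natAbs :=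
  (Nat.gcd_dvd_left _ _).trans (Finset.gcd_dvd (by simp [hk1, hk2]))

lemma npair_dvd_left {r : ℕ} (n : Fin r → ℤ) (i j : Fin r) :
    Npair n i j ∣ (n i + 1).natAbs :=
  (Nat.gcd_dvd_right _ _).trans (Nat.gcd_dvd_left _ _)

lemma npair_dvd_right {r : ℕ} (n : Fin r → ℤ) (i j : Fin r) :
    Npair n i j ∣ (n j + 1).natAbs :=
  (Nat.gcd_dvd_right _ _).trans (Nat.gcd_dvd_right _ _)

lemma coprime_abs_succ (m : ℤ) : Nat.Coprime (m.natAbs) ((m + 1).natAbs) :=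
  Int.isCoprime_iff_gcd_eq_one.mp ⟨-1, 1, by ring⟩

/-- If no `n i` equals `-1` and at least three indices `i` satisfy that `n i` is odd, then the
homomorphism `(Fin r → ℤ) → (∏_{i < j} ZMod (N i j)) × ZMod 2` sending `x` to the family of
images of `x i - x j` in `ZMod (N i j)` together with the image of `∑_{i : n i odd} x i` in
`ZMod 2` is surjective. -/
theorem Phi0_times_sp_surjective {r : ℕ} (n : Fin r → ℤ) (hn : ∀ i, n i ≠ -1)
    (h3 : 3 ≤ (Finset.univ.filter fun i => Odd (n i)).card) :
    Function.Surjective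
      (fun (x : Fin r → ℤ) =>
        ((fun (p : {p : Fin r × Fin r // p.1 < p.2}) =>
            ((x p.1.1 - x p.1.2 : ℤ) : ZMod (Npair n p.1.1 p.1.2)),
          ((∑ i ∈ Finset.univ.filter fun i => Odd (n i), x i : ℤ) : ZMod 2)))) := by
  classical
  set S : Finset (Fin r) := Finset.univ.filter fun i => Odd (n i) with hS
  set T := {p : Fin r × Fin r // p.1 < p.2}
  set N : T → ℕ := fun p => Npair n p.1.1 p.1.2 with hNdef
  -- pairwise coprime
  have hcop : ∀ p q : T, p ≠ q → Nat.Coprime (N p) (N q) := by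
    intro p q hpq
    -- find an index in one pair, not the other
    by_cases h1 : p.1.1 ≠ q.1.1 ∧ p.1.1 ≠ q.1.2
    · -- k = p.1.1 : N p ∣ n k + 1, N q ∣ n k
      have d1 : N p ∣ (n p.1.1 + 1).natAbs := npair_dvd_left n _ _
      have d2 : N q ∣ (n p.1.1).natAbs := npair_dvd_natAbs n h1.1 h1.2
      exact Nat.Coprime.coprime_dvd_right d2
        (Nat.Coprime.coprime_dvd_left d1 (coprime_abs_succ (n p.1.1)).symm)
    · by_cases h2 : p.1.2 ≠ q.1.1 ∧ p.1.2 ≠ q.1.2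
      · have d1 : N p ∣ (n p.1.2 + 1).natAbs := npair_dvd_right n _ _
        have d2 : N q ∣ (n p.1.2).natAbs := npair_dvd_natAbs n h2.1 h2.2
        exact Nat.Coprime.coprime_dvd_right d2
          (Nat.Coprime.coprime_dvd_left d1 (coprime_abs_succ (n p.1.2)).symm)
      · exfalso
        push_neg at h1 h2
        obtain ⟨⟨p1, p2⟩, hp⟩ := p
        obtain ⟨⟨q1, q2⟩, hq⟩ := q
        simp only [Ne] at h1 h2
        simp only at hp hq h1 h2
        by_cases e1 : p1 = q1
        · subst e1
          have e2 : p2 = q2 := h2 (ne_of_gt hp)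
          subst e2
          exact hpq (Subtype.ext rfl)
        · have e1' : p1 = q2 := h1 e1
          subst e1'
          have e2 : p2 = p1 := h2 (ne_of_gt (hq.trans hp))
          exact absurd (e2 ▸ hp) (lt_irrefl _)
  -- each N p is odd
  have hodd : ∀ p : T, Odd (N p) := by
    intro p
    have : ((S \ {p.1.1, p.1.2}).card : ℤ) ≥ 1 := by
      have := Finset.le_card_sdiff ({p.1.1, p.1.2} : Finset (Fin r)) S
      have hcard2 : ({p.1.1, p.1.2} : Finset (Fin r)).card ≤ 2 :=
        Finset.card_insert_le _ _ |>.trans (by simp)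
      omega
    obtain ⟨k, hk⟩ := Finset.card_pos.mp (by omega : 0 < (S \ {p.1.1, p.1.2}).card)
    simp only [Finset.mem_sdiff, hS, Finset.mem_filter, Finset.mem_insert,
      Finset.mem_singleton, not_or] at hk
    have d : N p ∣ (n k).natAbs := npair_dvd_natAbs n hk.2.1 hk.2.2
    have : Odd ((n k).natAbs) := Int.natAbs_odd.mpr hk.1.2
    exact this.of_dvd_nat d  -- maybe wrong name; fix later
  set M : T → ℕ := fun p => 2 * ∏ q ∈ Finset.univ.erase p, N q with hM
  have hMcop : ∀ p : T, Nat.Coprime (M p) (N p) := by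
    intro p
    refine Nat.Coprime.mul ((hodd p).coprime_two_left) ?_
    exact Nat.coprime_prod_left_iff.mpr fun q hq => hcop q p (Finset.ne_of_mem_erase hq)
  have hdvdM : ∀ p q : T, p ≠ q → (N q : ℤ) ∣ (M p : ℤ) := by
    intro p q hpq
    refine Int.natCast_dvd_natCast.mpr (Dvd.dvd.mul_left ?_ 2)
    exact Finset.dvd_prod_of_mem _ (Finset.mem_erase.mpr ⟨fun h => hpq h.symm, Finset.mem_univ _⟩)
  set P : ℕ := ∏ q : T, N q with hP
  have hdvdP : ∀ q : T, (N q : ℤ) ∣ (P : ℤ) := fun q =>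
    Int.natCast_dvd_natCast.mpr (Finset.dvd_prod_of_mem _ (Finset.mem_univ _))
  have hPodd : Odd P := Finset.prod_induction _ _ (fun a b => Odd.mul) odd_one fun q _ => hodd q
  have hSne : S.Nonempty := Finset.card_pos.mp (by omega)
  obtain ⟨i0, hi0⟩ := hSne
  rintro ⟨a, s⟩
  choose b hb using fun p : T => ZMod.intCast_surjective (n := N p) (a p * ((M p : ZMod (N p)))⁻¹)
  obtain ⟨c, hc⟩ := ZMod.intCast_surjective (n := 2) s
  refine ⟨(fun v => (∑ p : T, if p.1.1 = v then b p * (M p : ℤ) else 0)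
      + (if i0 = v then c * (P : ℤ) else 0)), ?_⟩
  have hdvdM' : ∀ p q : T, p ≠ q → N q ∣ M p := fun p q h =>
    Int.ofNat_dvd.mp (hdvdM p q h)
  have hdvdP' : ∀ q : T, N q ∣ P := fun q => Int.ofNat_dvd.mp (hdvdP q)
  refine Prod.ext (funext fun q => ?_) ?_
  · -- difference component
    have hne : q.1.1 ≠ q.1.2 := ne_of_lt q.2
    have hzn : ∀ p : T, p ≠ q → ((M p : ZMod (N q))) = 0 := fun p hp =>
      (ZMod.natCast_eq_zero_iff _ _).mpr (hdvdM' p q hp)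
    have hPzn : ((P : ZMod (N q))) = 0 :=
      (ZMod.natCast_eq_zero_iff _ _).mpr (hdvdP' q)
    have hu : ((M q : ZMod (N q))) * ((M q : ZMod (N q)))⁻¹ = 1 :=
      ZMod.coe_mul_inv_eq_one (M q) (hMcop q)
    have hsum : ∀ v : Fin r,
        ((∑ p : T, if p.1.1 = v then b p * (M p : ℤ) else 0 : ℤ) : ZMod (N q))
        = if q.1.1 = v then (b q : ZMod (N q)) * (M q : ℕ) else 0 := by
      intro v
      push_cast [apply_ite (fun z : ℤ => (z : ZMod (N q)))]
      rw [Finset.sum_eq_single q]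
      · intro p _ hp
        simp [hzn p hp]
      · simp
    have hB : ∀ v : Fin r, ((if i0 = v then c * (P : ℤ) else 0 : ℤ) : ZMod (N q)) = 0 := by
      intro v; split <;> push_cast [hPzn] <;> ring
    dsimp only
    rw [Int.cast_sub, Int.cast_add, Int.cast_add, hsum, hsum, hB, hB, if_pos rfl, if_neg hne,
      hb q, add_zero, add_zero, sub_zero, mul_assoc, mul_comm ((M q : ZMod (N q)))⁻¹, hu, mul_one]
  · -- parity component
    have h2M : ∀ p : T, ((M p : ZMod 2)) = 0 := fun p =>
      (ZMod.natCast_eq_zero_iff _ _).mpr ⟨_, rfl⟩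
    have h2P : ((P : ZMod 2)) = 1 := by
      rw [← ZMod.natCast_mod, Nat.odd_iff.mp hPodd, Nat.cast_one]
    have hAsum : ((∑ i ∈ S, ∑ p : T, if (↑p : Fin r × Fin r).1 = i then b p * (M p : ℤ) else 0 : ℤ)
        : ZMod 2) = 0 := by
      push_cast [apply_ite (fun z : ℤ => (z : ZMod 2))]
      refine Finset.sum_eq_zero fun i _ => Finset.sum_eq_zero fun p _ => ?_
      simp [h2M p]
    have hBsum : ((∑ i ∈ S, if i0 = i then c * (P : ℤ) else 0 : ℤ) : ZMod 2) = s := by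
      rw [Finset.sum_ite_eq S i0 fun _ => c * (P : ℤ), if_pos hi0]
      push_cast
      rw [h2P, hc, mul_one]
    dsimp only
    rw [Finset.sum_add_distrib, Int.cast_add, hAsum, hBsum, zero_add]
end

section
/- For all distinct indices i, j ∈ Fin r, let v ∈ Fin r → ℤ be the integer vector with v i = n j, v j = n i, and v m = 0 for m ∉ {i, j}. Then: (a) for all distinct indices k, l ∈ Fin r, the integer N k l divides v k − v l; and (b) the integer ∑_{m : n m odd} v m is even. -/
lemma npair_dvd_mid {r : ℕ} (n : Fin r → ℤ) (k l m : Fin r) (h1 : m ≠ k) (h2 : m ≠ l) :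
    (Npair n k l : ℤ) ∣ n m := by
  have hm : m ∈ Finset.univ \ ({k, l} : Finset (Fin r)) := by simp [h1, h2]
  have h : Npair n k l ∣ (n m).natAbs :=
    Nat.dvd_trans (Nat.gcd_dvd_left _ _) (Finset.gcd_dvd hm)
  exact dvd_trans (Int.natCast_dvd_natCast.mpr h) (Int.natAbs_dvd.mpr dvd_rfl)

lemma npair_dvd_fst {r : ℕ} (n : Fin r → ℤ) (k l : Fin r) :
    (Npair n k l : ℤ) ∣ n k + 1 := by
  have h : Npair n k l ∣ (n k + 1).natAbs :=
    Nat.dvd_trans (Nat.gcd_dvd_right _ _) (Nat.gcd_dvd_left _ _)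
  exact dvd_trans (Int.natCast_dvd_natCast.mpr h) (Int.natAbs_dvd.mpr dvd_rfl)

lemma npair_dvd_snd {r : ℕ} (n : Fin r → ℤ) (k l : Fin r) :
    (Npair n k l : ℤ) ∣ n l + 1 := by
  have h : Npair n k l ∣ (n l + 1).natAbs :=
    Nat.dvd_trans (Nat.gcd_dvd_right _ _) (Nat.gcd_dvd_right _ _)
  exact dvd_trans (Int.natCast_dvd_natCast.mpr h) (Int.natAbs_dvd.mpr dvd_rfl)

/-- For distinct `i, j`, let `v` be the integer vector with `v i = n j`, `v j = n i` and
`v m = 0` otherwise. Then (a) `N k l` divides `v k - v l` for all distinct `k, l`, and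
(b) `∑_{m : n m odd} v m` is even. -/
theorem tau_vector_in_kernel {r : ℕ} (n : Fin r → ℤ) (i j : Fin r) (hij : i ≠ j)
    (v : Fin r → ℤ) (hv : v = fun m => if m = i then n j else if m = j then n i else 0) :
    (∀ k l : Fin r, k ≠ l → ((Npair n k l : ℤ) ∣ v k - v l)) ∧
      Even (∑ m ∈ Finset.univ.filter fun m => Odd (n m), v m) := by
  subst hv
  constructor
  · intro k l hkl
    by_cases hki : k = i
    · by_cases hlj : l = j
      · rw [hki, hlj]
        simp only [if_pos rfl, if_neg hij.symm, if_neg hij, if_true, eq_self_iff_true]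
        have : n j - n i = (n j + 1) - (n i + 1) := by ring
        rw [this]
        exact dvd_sub (npair_dvd_snd n i j) (npair_dvd_fst n i j)
      · have hli : l ≠ i := fun h => hkl (hki.trans h.symm)
        rw [hki]
        simp only [if_pos rfl, if_neg hli, if_neg hlj, sub_zero]
        exact npair_dvd_mid n i l j hij.symm (Ne.symm hlj)
    · by_cases hkj : k = j
      · by_cases hli : l = i
        · rw [hkj, hli]
          simp only [if_pos rfl, if_neg hij, if_neg hij.symm, if_true, eq_self_iff_true]
          have : n i - n j = (n i + 1) - (n j + 1) := by ring
          rw [this]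
          exact dvd_sub (npair_dvd_snd n j i) (npair_dvd_fst n j i)
        · have hlj : l ≠ j := fun h => hkl (hkj.trans h.symm)
          rw [hkj]
          simp only [if_pos rfl, if_neg hij.symm, if_neg hli, if_neg hlj, sub_zero]
          exact npair_dvd_mid n j l i hij (Ne.symm hli)
      · by_cases hli : l = i
        · rw [hli]
          simp only [if_pos rfl, if_neg hki, if_neg hkj, if_true, eq_self_iff_true, zero_sub]
          exact (npair_dvd_mid n k i j (Ne.symm hkj) hij.symm).neg_right
        · by_cases hlj : l = j
          · rw [hlj]
            simp only [if_pos rfl, if_neg hki, if_neg hkj, if_neg hij, if_neg hij.symm, if_true, eq_self_iff_true, zero_sub]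
            exact (npair_dvd_mid n k j i (Ne.symm hki) hij).neg_right
          · simp only [if_neg hki, if_neg hkj, if_neg hli, if_neg hlj, sub_zero]
            exact dvd_zero _
  · have hv' : ∀ m : Fin r, (if m = i then n j else if m = j then n i else 0)
        = (if m = i then n j else 0) + (if m = j then n i else 0) := by
      intro m
      rcases eq_or_ne m i with rfl | h1
      · simp [hij]
      · simp [h1]
    simp only [hv', Finset.sum_add_distrib, Finset.sum_ite_eq', Finset.mem_filter,
      Finset.mem_univ, true_and]
    by_cases hoi : Odd (n i) <;> by_cases hoj : Odd (n j) <;> simp [hoi, hoj]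
    · exact hoj.add_odd hoi
    · exact Int.not_odd_iff_even.mp hoj
    · exact Int.not_odd_iff_even.mp hoi
end

section
/- Assume n i ≠ −1 for all i, ∑_{i} n i = −2, and at least three indices i have n i odd. Then the index of the subgroup H in G equals 2·∏_{i < j} N i j (the product over all unordered pairs of distinct indices). -/
namespace HsubAux

/-! ### Generic lemmas -/

lemma relindex_dvd_of_cyclic {G : Type*} [AddCommGroup G] (K L : AddSubgroup G) (x : G)
    (hL : L = K ⊔ AddSubgroup.closure {x}) (c : ℕ)
    (hc : (c : ℤ) • x ∈ K) : K.relIndex L ∣ c := by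
  have hxL : x ∈ L := by
    rw [hL]
    exact le_sup_right (α := AddSubgroup G) (AddSubgroup.subset_closure rfl)
  set K' : AddSubgroup L := K.addSubgroupOf L with hK'
  set y : L ⧸ K' := QuotientAddGroup.mk ⟨x, hxL⟩ with hy
  have hgen : ∀ q : L ⧸ K', q ∈ AddSubgroup.zmultiples y := by
    intro q
    induction q using QuotientAddGroup.induction_on with
    | H z =>
      obtain ⟨z, hzL⟩ := z
      have hz : z ∈ K ⊔ AddSubgroup.closure {x} := hL ▸ hzL
      rw [AddSubgroup.mem_sup] at hz
      obtain ⟨k, hk, w, hw, hkw⟩ := hz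
      rw [AddSubgroup.mem_closure_singleton] at hw
      obtain ⟨m, hm⟩ := hw
      refine ⟨m, ?_⟩
      have hkL : k ∈ L := by
        have hwL : w ∈ L := by
          rw [hL]
          exact le_sup_right (α := AddSubgroup G)
            (AddSubgroup.mem_closure_singleton.mpr ⟨m, hm⟩)
        have := sub_mem hzL hwL
        rw [← hkw, add_sub_cancel_right] at this
        exact this
      have hzeq : (⟨z, hzL⟩ : L) = ⟨k, hkL⟩ + m • ⟨x, hxL⟩ := by
        ext
        simp [← hkw, ← hm]
      rw [hy, hzeq]
      have hk0 : (QuotientAddGroup.mk (⟨k, hkL⟩ : L) : L ⧸ K') = 0 := by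
        rw [QuotientAddGroup.eq_zero_iff]
        exact hk
      rw [QuotientAddGroup.mk_add, hk0, zero_add, QuotientAddGroup.mk_zsmul]
  have htop : AddSubgroup.zmultiples y = (⊤ : AddSubgroup (L ⧸ K')) :=
    top_le_iff.mp (fun q _ => hgen q)
  have hcard : K.relIndex L = addOrderOf y := by
    rw [AddSubgroup.relIndex, AddSubgroup.index, ← Nat.card_zmultiples y, htop,
      Nat.card_congr AddSubgroup.topEquiv.toEquiv]
  rw [hcard]
  apply addOrderOf_dvd_of_nsmul_eq_zero
  rw [hy, ← QuotientAddGroup.mk_nsmul, QuotientAddGroup.eq_zero_iff]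
  have hns : (c : ℤ) • (⟨x, hxL⟩ : L) = c • (⟨x, hxL⟩ : L) := natCast_zsmul _ _
  rw [← hns]
  show (c : ℤ) • x ∈ K
  exact hc

/-- the subgroup of `ℤ` of multipliers `m` with `m • x ∈ K`. -/
def Imul {G : Type*} [AddCommGroup G] (K : AddSubgroup G) (x : G) : AddSubgroup ℤ where
  carrier := {m | m • x ∈ K}
  zero_mem' := by simp only [Set.mem_setOf_eq, zero_zsmul]; exact K.zero_mem
  add_mem' := by
    intro a b ha hb
    simp only [Set.mem_setOf_eq, add_zsmul] at *
    exact K.add_mem ha hb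
  neg_mem' := by
    intro a ha
    simp only [Set.mem_setOf_eq, neg_zsmul] at *
    exact K.neg_mem ha

lemma mem_Imul {G : Type*} [AddCommGroup G] (K : AddSubgroup G) (x : G) (m : ℤ) :
    m ∈ Imul K x ↔ m • x ∈ K := Iff.rfl

lemma exists_int_gen (I : AddSubgroup ℤ) : ∃ g : ℤ, ∀ m, m ∈ I ↔ g ∣ m := by
  obtain ⟨g, hg⟩ := Int.subgroup_cyclic I
  refine ⟨g, fun m => ?_⟩
  rw [hg, AddSubgroup.mem_closure_singleton]
  constructor
  · rintro ⟨k, rfl⟩; exact ⟨k, by rw [smul_eq_mul, mul_comm]⟩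
  · rintro ⟨k, rfl⟩; exact ⟨k, by rw [smul_eq_mul, mul_comm]⟩

/-! ### esingle and tau arithmetic -/

variable {r : ℕ} (n : Fin r → ℤ)

lemma esingle_add (i : Fin r) (a b : ℤ) :
    esingle n i (a + b) = esingle n i a + esingle n i b := by
  unfold esingle
  rw [Int.cast_add, Pi.single_add]

lemma smul_esingle (m : ℤ) (i : Fin r) (a : ℤ) :
    m • esingle n i a = esingle n i (m * a) := by
  unfold esingle
  ext j
  by_cases h : j = i
  · subst h
    simp only [Pi.smul_apply, Pi.single_eq_same, zsmul_eq_mul, Int.cast_mul]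
  · simp only [Pi.smul_apply, Pi.single_eq_of_ne h, smul_zero]

lemma esingle_self_mul (i : Fin r) (a : ℤ) :
    esingle n i ((n i + 1) * a) = 0 := by
  unfold esingle
  have h1 : ((( n i + 1) * a : ℤ) : ZMod ((n i + 1).natAbs)) = 0 := by
    rw [Int.cast_mul]
    have h0 : ((n i + 1 : ℤ) : ZMod ((n i + 1).natAbs)) = 0 := by
      rw [ZMod.intCast_zmod_eq_zero_iff_dvd]
      exact Int.natAbs_dvd.mpr dvd_rfl
    rw [h0, zero_mul]
  rw [h1, Pi.single_zero]

lemma tau_mem (i j : Fin r) (h : i ≠ j) : tau n i j ∈ Hsub n :=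
  AddSubgroup.subset_closure ⟨i, j, h, rfl⟩

lemma mem1 (t k : Fin r) (h : k ≠ t) :
    esingle n t ((n k + 1) * n k) ∈ Hsub n := by
  have h1 : (n k + 1) • tau n t k = esingle n t ((n k + 1) * n k) := by
    unfold tau
    rw [smul_add, smul_esingle, smul_esingle, esingle_self_mul, add_zero]
  rw [← h1]
  exact zsmul_mem (tau_mem n t k (Ne.symm h)) _

lemma mem2 (t i k : Fin r) (hit : i ≠ t) (hkt : k ≠ t) (hik : i ≠ k) :
    esingle n t (2 * n i * n k) ∈ Hsub n := by
  have h1 : n k • tau n i t - n t • tau n i k + n i • tau n t k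
      = esingle n t (2 * n i * n k) := by
    unfold tau
    rw [smul_add, smul_add, smul_add, smul_esingle, smul_esingle, smul_esingle,
      smul_esingle, smul_esingle, smul_esingle]
    have e1 : esingle n i (n k * n t) - esingle n i (n t * n k) = 0 := by
      rw [mul_comm (n k) (n t)]; exact sub_self _
    have e2 : esingle n k (n i * n t) - esingle n k (n t * n i) = 0 := by
      rw [mul_comm (n i) (n t)]; exact sub_self _
    have e3 : esingle n t (n k * n i) + esingle n t (n i * n k)
        = esingle n t (2 * n i * n k) := by
      rw [← esingle_add]
      congr 1
      ring
    calc esingle n i (n k * n t) + esingle n t (n k * n i)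
          - (esingle n i (n t * n k) + esingle n k (n t * n i))
          + (esingle n t (n i * n k) + esingle n k (n i * n t))
        = (esingle n i (n k * n t) - esingle n i (n t * n k))
          + (esingle n k (n i * n t) - esingle n k (n t * n i))
          + (esingle n t (n k * n i) + esingle n t (n i * n k)) := by abel
      _ = esingle n t (2 * n i * n k) := by rw [e1, e2, e3, zero_add, zero_add]
  rw [← h1]
  refine add_mem (sub_mem (zsmul_mem (tau_mem n i t hit) _) (zsmul_mem (tau_mem n i k hik) _))
    (zsmul_mem (tau_mem n t k (Ne.symm hkt)) _)

lemma mem3 (t j : Fin r) :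
    esingle n t (n j) = tau n t j - n t • esingle n j 1 := by
  unfold tau
  rw [smul_esingle, mul_one, add_sub_cancel_right]

lemma single_eq_smul_esingle (hn : ∀ i, n i ≠ -1) (s : Fin r)
    (v : ZMod ((n s + 1).natAbs)) :
    Pi.single s v = (v.val : ℤ) • esingle n s 1 := by
  haveI hA : NeZero ((n s + 1).natAbs) := ⟨fun h => hn s (by omega)⟩
  rw [smul_esingle, mul_one]
  unfold esingle
  have hv : (((v.val : ℤ)) : ZMod ((n s + 1).natAbs)) = v := by
    rw [Int.cast_natCast]
    exact ZMod.natCast_rightInverse v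
  rw [hv]

/-! ### The chain of subgroups -/

def Kc (t : ℕ) : AddSubgroup ((k : Fin r) → ZMod ((n k + 1).natAbs)) :=
  Hsub n ⊔ AddSubgroup.closure {x | ∃ s : Fin r, t ≤ (s : ℕ) ∧ x = esingle n s 1}

lemma Hsub_le_Kc (t : ℕ) : Hsub n ≤ Kc n t := le_sup_left

lemma Kc_antitone {t : ℕ} : Kc n (t + 1) ≤ Kc n t := by
  apply sup_le_sup_left
  apply AddSubgroup.closure_mono
  rintro x ⟨s, hs, rfl⟩
  exact ⟨s, by omega, rfl⟩

lemma Kc_r : Kc n r = Hsub n := by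
  have h : {x : (k : Fin r) → ZMod ((n k + 1).natAbs) |
      ∃ s : Fin r, r ≤ (s : ℕ) ∧ x = esingle n s 1} = (∅ : Set _) := by
    ext x
    simp only [Set.mem_setOf_eq, Set.mem_empty_iff_false, iff_false, not_exists]
    rintro s ⟨hs, -⟩
    exact absurd hs (by omega)
  rw [Kc, h, AddSubgroup.closure_empty, sup_bot_eq]

lemma Kc_zero (hn : ∀ i, n i ≠ -1) : Kc n 0 = ⊤ := by
  rw [eq_top_iff]
  intro x _
  have hx : x = ∑ s : Fin r, Pi.single s (x s) := (Finset.univ_sum_single x).symm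
  rw [hx]
  apply AddSubgroup.sum_mem
  intro s _
  rw [single_eq_smul_esingle n hn s (x s)]
  refine zsmul_mem ?_ _
  exact le_sup_right (α := AddSubgroup _)
    (AddSubgroup.subset_closure ⟨s, by omega, rfl⟩)

lemma esingle_mem_Kc (t : ℕ) (j : Fin r) (hj : t ≤ (j : ℕ)) :
    esingle n j 1 ∈ Kc n t :=
  le_sup_right (α := AddSubgroup _) (AddSubgroup.subset_closure ⟨j, hj, rfl⟩)

lemma Kc_eq_sup (t : Fin r) :
    Kc n (t : ℕ) = Kc n ((t : ℕ) + 1) ⊔ AddSubgroup.closure {esingle n t 1} := by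
  have hset : {x : (k : Fin r) → ZMod ((n k + 1).natAbs) |
        ∃ s : Fin r, (t : ℕ) ≤ (s : ℕ) ∧ x = esingle n s 1}
      = {x | ∃ s : Fin r, (t : ℕ) + 1 ≤ (s : ℕ) ∧ x = esingle n s 1} ∪ {esingle n t 1} := by
    ext x
    simp only [Set.mem_setOf_eq, Set.mem_union, Set.mem_singleton_iff]
    constructor
    · rintro ⟨s, hs, rfl⟩
      rcases eq_or_lt_of_le hs with h | h
      · right
        have hst : s = t := Fin.ext (by omega)
        rw [hst]
      · left; exact ⟨s, by omega, rfl⟩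
    · rintro (⟨s, hs, rfl⟩ | rfl)
      · exact ⟨s, by omega, rfl⟩
      · exact ⟨t, le_rfl, rfl⟩
  rw [Kc, hset, AddSubgroup.closure_union, Kc, sup_assoc]

lemma index_Kc (hn : ∀ i, n i ≠ -1) :
    (Hsub n).index = ∏ t ∈ Finset.range r, (Kc n (t + 1)).relIndex (Kc n t) := by
  have key : ∀ m, m ≤ r →
      (Kc n m).index = ∏ t ∈ Finset.range m, (Kc n (t + 1)).relIndex (Kc n t) := by
    intro m
    induction m with
    | zero => intro _; rw [Kc_zero n hn, Finset.prod_range_zero, AddSubgroup.index_top]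
    | succ m ih =>
      intro hm
      rw [Finset.prod_range_succ, ← ih (by omega), mul_comm]
      exact (AddSubgroup.relIndex_mul_index (Kc_antitone n)).symm
  rw [← Kc_r n]
  exact key r le_rfl

/-! ### The gcd bound for each step -/

def pairsNot (t : Fin r) : Finset (Fin r × Fin r) :=
  Finset.univ.filter fun q : Fin r × Fin r => q.1 ≠ q.2 ∧ q.1 ≠ t ∧ q.2 ≠ t

def cF (t : Fin r) : ℕ :=
  Nat.gcd ((n t + 1).natAbs)
    (Nat.gcd ((Finset.univ.erase t).gcd fun k => ((n k + 1) * n k).natAbs)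
      (Nat.gcd ((pairsNot t).gcd fun q => (2 * n q.1 * n q.2).natAbs)
        ((Finset.univ.filter fun j : Fin r => (t : ℕ) < (j : ℕ)).gcd fun j => (n j).natAbs)))

lemma cF_dvd_a (t : Fin r) : cF n t ∣ (n t + 1).natAbs := Nat.gcd_dvd_left _ _

lemma cF_dvd_an (t k : Fin r) (h : k ≠ t) : cF n t ∣ ((n k + 1) * n k).natAbs :=
  ((Nat.gcd_dvd_right _ _).trans (Nat.gcd_dvd_left _ _)).trans
    (Finset.gcd_dvd (Finset.mem_erase.mpr ⟨h, Finset.mem_univ k⟩))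

lemma cF_dvd_2nn (t i k : Fin r) (hik : i ≠ k) (hit : i ≠ t) (hkt : k ≠ t) :
    cF n t ∣ (2 * n i * n k).natAbs := by
  have h1 : ((pairsNot t).gcd fun q : Fin r × Fin r => (2 * n q.1 * n q.2).natAbs)
      ∣ (2 * n i * n k).natAbs :=
    Finset.gcd_dvd (Finset.mem_filter.mpr ⟨Finset.mem_univ (i, k), hik, hit, hkt⟩)
  exact ((Nat.gcd_dvd_right _ _).trans ((Nat.gcd_dvd_right _ _).trans
    (Nat.gcd_dvd_left _ _))).trans h1

lemma cF_dvd_nj (t j : Fin r) (h : (t : ℕ) < (j : ℕ)) : cF n t ∣ (n j).natAbs := by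
  refine ((Nat.gcd_dvd_right _ _).trans ((Nat.gcd_dvd_right _ _).trans
    (Nat.gcd_dvd_right _ _))).trans (Finset.gcd_dvd ?_)
  exact Finset.mem_filter.mpr ⟨Finset.mem_univ _, h⟩

lemma cF_ne_zero (hn : ∀ i, n i ≠ -1) (t : Fin r) : cF n t ≠ 0 := by
  intro h
  have := cF_dvd_a n t
  rw [h] at this
  have h0 := Nat.eq_zero_of_zero_dvd this
  exact hn t (by omega)

lemma cF_smul_mem (t : Fin r) :
    (cF n t : ℤ) • esingle n t 1 ∈ Kc n ((t : ℕ) + 1) := by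
  set K := Kc n ((t : ℕ) + 1)
  set I := Imul K (esingle n t 1) with hI
  suffices hs : (cF n t : ℤ) ∈ I from hs
  obtain ⟨g, hg⟩ := exists_int_gen I
  have hmem : ∀ m : ℤ, esingle n t m ∈ K → m ∈ I := by
    intro m hm
    rw [mem_Imul, smul_esingle, mul_one]
    exact hm
  -- members of I
  have m1 : (n t + 1) ∈ I := by
    apply hmem
    have := esingle_self_mul n t 1
    rw [mul_one] at this
    rw [this]
    exact K.zero_mem
  have m2 : ∀ k, k ≠ t → ((n k + 1) * n k) ∈ I := fun k hk =>
    hmem _ (Hsub_le_Kc n _ (mem1 n t k hk))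
  have m3 : ∀ i k, i ≠ k → i ≠ t → k ≠ t → (2 * n i * n k) ∈ I := fun i k hik hit hkt =>
    hmem _ (Hsub_le_Kc n _ (mem2 n t i k hit hkt hik))
  have m4 : ∀ j : Fin r, (t : ℕ) < (j : ℕ) → n j ∈ I := by
    intro j hj
    apply hmem
    rw [mem3 n t j]
    refine sub_mem (Hsub_le_Kc n _ (tau_mem n t j (Fin.ne_of_val_ne (by omega))))
      (zsmul_mem (esingle_mem_Kc n _ j hj) _)
  -- g divides the gcd
  rw [hg]
  have habs : ∀ m : ℤ, m ∈ I → g.natAbs ∣ m.natAbs := by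
    intro m hm
    exact Int.natAbs_dvd_natAbs.mpr ((hg m).mp hm)
  have hdvd : g.natAbs ∣ cF n t := by
    refine Nat.dvd_gcd (habs _ m1) (Nat.dvd_gcd (Finset.dvd_gcd ?_)
      (Nat.dvd_gcd (Finset.dvd_gcd ?_) (Finset.dvd_gcd ?_)))
    · intro k hk
      exact habs _ (m2 k (Finset.mem_erase.mp hk).1)
    · intro q hq
      obtain ⟨-, h1, h2, h3⟩ := Finset.mem_filter.mp hq
      exact habs _ (m3 q.1 q.2 h1 h2 h3)
    · intro j hj
      exact habs _ (m4 j (Finset.mem_filter.mp hj).2)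
  have : (g.natAbs : ℤ) ∣ (cF n t : ℤ) := Int.natCast_dvd_natCast.mpr hdvd
  exact (Int.natAbs_dvd.mp this)

lemma relindex_dvd_cF (t : Fin r) :
    (Kc n ((t : ℕ) + 1)).relIndex (Kc n (t : ℕ)) ∣ cF n t :=
  relindex_dvd_of_cyclic _ _ (esingle n t 1) (Kc_eq_sup n t) (cF n t) (cF_smul_mem n t)

def cFnat : ℕ → ℕ := fun t => if h : t < r then cF n ⟨t, h⟩ else 1

lemma index_dvd_prod_cF (hn : ∀ i, n i ≠ -1) :
    (Hsub n).index ∣ ∏ t ∈ Finset.range r, cFnat n t := by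
  rw [index_Kc n hn]
  refine Finset.prod_dvd_prod_of_dvd _ _ ?_
  intro t ht
  have htr : t < r := Finset.mem_range.mp ht
  have := relindex_dvd_cF n ⟨t, htr⟩
  simpa [cFnat, htr] using this
/-! ### Part 1 : lower bound via homomorphisms -/

lemma intCast_zmod_zero_of_dvd {N : ℕ} (m : ℤ) (h : N ∣ m.natAbs) : ((m : ZMod N)) = 0 := by
  rw [ZMod.intCast_zmod_eq_zero_iff_dvd]
  exact Int.natCast_dvd_natCast.mpr h |>.trans (Int.natAbs_dvd.mpr dvd_rfl)

lemma intCast_zmod_neg_one_of_dvd {N : ℕ} (m : ℤ) (h : N ∣ (m + 1).natAbs) :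
    ((m : ZMod N)) = -1 := by
  have h0 : ((m + 1 : ℤ) : ZMod N) = 0 := intCast_zmod_zero_of_dvd _ h
  rw [Int.cast_add, Int.cast_one] at h0
  linear_combination h0

lemma odd_intCast_zmod_two (m : ℤ) (h : Odd m) : (m : ZMod 2) = 1 := by
  obtain ⟨k, rfl⟩ := h
  push_cast
  have h2 : (2 : ZMod 2) = 0 := by decide
  rw [h2]; ring

lemma even_intCast_zmod_two (m : ℤ) (h : Even m) : (m : ZMod 2) = 0 := by
  obtain ⟨k, rfl⟩ := h
  push_cast
  have h2 : (2 : ZMod 2) = 0 := by decide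
  rw [← two_mul, h2]; ring

/-- The parity homomorphism. -/
def g2 (i : Fin r) : ZMod ((n i + 1).natAbs) →+ ZMod 2 :=
  if h : (2 ∣ (n i + 1).natAbs) then (ZMod.castHom h (ZMod 2)).toAddMonoidHom else 0

def hom2 : ((k : Fin r) → ZMod ((n k + 1).natAbs)) →+ ZMod 2 :=
  ∑ i : Fin r, (g2 n i).comp (Pi.evalAddMonoidHom (fun k => ZMod ((n k + 1).natAbs)) i)

lemma hom_sum_apply {ι M N : Type*} [AddCommMonoid M] [AddCommMonoid N]
    (s : Finset ι) (f : ι → (M →+ N)) (x : M) :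
    (∑ i ∈ s, f i) x = ∑ i ∈ s, f i x := by
  induction s using Finset.cons_induction with
  | empty => simp
  | cons a s ha ih => rw [Finset.sum_cons, Finset.sum_cons, AddMonoidHom.add_apply, ih]

lemma hom2_apply (x : (k : Fin r) → ZMod ((n k + 1).natAbs)) :
    hom2 n x = ∑ i : Fin r, g2 n i (x i) := by
  rw [hom2, hom_sum_apply]
  rfl

lemma g2_odd (i : Fin r) (h : Odd (n i)) (m : ℤ) :
    g2 n i ((m : ZMod ((n i + 1).natAbs))) = (m : ZMod 2) := by
  have hdvd : 2 ∣ (n i + 1).natAbs := by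
    obtain ⟨k, hk⟩ := h
    omega
  rw [g2, dif_pos hdvd]
  exact map_intCast (ZMod.castHom hdvd (ZMod 2)) m

lemma g2_even (i : Fin r) (h : ¬ Odd (n i)) : g2 n i = 0 := by
  rw [Int.not_odd_iff_even] at h
  have hdvd : ¬ (2 ∣ (n i + 1).natAbs) := by
    obtain ⟨k, hk⟩ := h
    omega
  rw [g2, dif_neg hdvd]

lemma hom2_esingle (s : Fin r) (m : ℤ) :
    hom2 n (esingle n s m) = g2 n s ((m : ZMod ((n s + 1).natAbs))) := by
  rw [hom2_apply]
  have hss : esingle n s m s = ((m : ZMod ((n s + 1).natAbs))) := Pi.single_eq_same _ _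
  rw [← hss]
  refine Finset.sum_eq_single_of_mem s (Finset.mem_univ s) (fun i _ his => ?_)
  rw [esingle, Pi.single_eq_of_ne his, map_zero]

lemma hom2_tau (i j : Fin r) (hij : i ≠ j) : hom2 n (tau n i j) = 0 := by
  rw [tau, map_add, hom2_esingle, hom2_esingle]
  by_cases hi : Odd (n i) <;> by_cases hj : Odd (n j)
  · rw [g2_odd n i hi, g2_odd n j hj, odd_intCast_zmod_two _ hj, odd_intCast_zmod_two _ hi]
    decide
  · rw [g2_odd n i hi, g2_even n j hj,
      even_intCast_zmod_two _ (Int.not_odd_iff_even.mp hj), AddMonoidHom.zero_apply, add_zero]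
  · rw [g2_even n i hi, g2_odd n j hj,
      even_intCast_zmod_two _ (Int.not_odd_iff_even.mp hi), AddMonoidHom.zero_apply, zero_add]
  · rw [g2_even n i hi, g2_even n j hj]; rfl

lemma Hsub_le_ker_hom2 : Hsub n ≤ (hom2 n).ker := by
  rw [Hsub, AddSubgroup.closure_le]
  rintro x ⟨i, j, hij, rfl⟩
  exact hom2_tau n i j hij

lemma two_dvd_index (hodd : 3 ≤ (Finset.univ.filter fun i => Odd (n i)).card) :
    2 ∣ (Hsub n).index := by
  obtain ⟨i0, hi0⟩ := Finset.card_pos.mp (by omega :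
    0 < (Finset.univ.filter fun i => Odd (n i)).card)
  have hi0odd : Odd (n i0) := (Finset.mem_filter.mp hi0).2
  have hsurj : (hom2 n).range = ⊤ := by
    rw [eq_top_iff]
    intro y _
    have hy : ∀ z : ZMod 2, z = 0 ∨ z = 1 := by decide
    rcases hy y with rfl | rfl
    · exact zero_mem _
    · exact ⟨esingle n i0 1, by rw [hom2_esingle, g2_odd n i0 hi0odd, Int.cast_one]⟩
  have hker : ((hom2 n).ker).index = 2 := by
    rw [AddSubgroup.index_ker, hsurj, Nat.card_congr AddSubgroup.topEquiv.toEquiv,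
      Nat.card_zmod]
  rw [← hker]
  exact AddSubgroup.index_dvd_of_le (Hsub_le_ker_hom2 n)

/-! pair homomorphisms -/

lemma Npair_dvd_ai (i j : Fin r) : Npair n i j ∣ (n i + 1).natAbs :=
  (Nat.gcd_dvd_right _ _).trans (Nat.gcd_dvd_left _ _)

lemma Npair_dvd_aj (i j : Fin r) : Npair n i j ∣ (n j + 1).natAbs :=
  (Nat.gcd_dvd_right _ _).trans (Nat.gcd_dvd_right _ _)

lemma Npair_dvd_nk (i j k : Fin r) (hki : k ≠ i) (hkj : k ≠ j) :
    Npair n i j ∣ (n k).natAbs := by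
  refine (Nat.gcd_dvd_left _ _).trans (Finset.gcd_dvd ?_)
  simp [Finset.mem_sdiff, hki, hkj]

def homN (i j : Fin r) : ((k : Fin r) → ZMod ((n k + 1).natAbs)) →+ ZMod (Npair n i j) :=
  ((ZMod.castHom (Npair_dvd_ai n i j) (ZMod (Npair n i j))).toAddMonoidHom.comp
    (Pi.evalAddMonoidHom (fun k => ZMod ((n k + 1).natAbs)) i)) -
  ((ZMod.castHom (Npair_dvd_aj n i j) (ZMod (Npair n i j))).toAddMonoidHom.comp
    (Pi.evalAddMonoidHom (fun k => ZMod ((n k + 1).natAbs)) j))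

lemma homN_esingle (i j : Fin r) (hij : i ≠ j) (s : Fin r) (m : ℤ) :
    homN n i j (esingle n s m) =
      if s = i then (m : ZMod (Npair n i j)) else
        (if s = j then -(m : ZMod (Npair n i j)) else 0) := by
  rw [homN]
  simp only [AddMonoidHom.sub_apply, AddMonoidHom.comp_apply, Pi.evalAddMonoidHom_apply,
    RingHom.toAddMonoidHom_eq_coe, AddMonoidHom.coe_coe]
  by_cases hsi : s = i
  · subst hsi
    rw [if_pos rfl, esingle, Pi.single_eq_same, Pi.single_eq_of_ne (Ne.symm hij),
      map_intCast, map_zero, sub_zero]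
  · by_cases hsj : s = j
    · subst hsj
      rw [if_neg hsi, if_pos rfl, esingle, Pi.single_eq_same,
        Pi.single_eq_of_ne (fun h => hsi h.symm), map_intCast, map_zero, zero_sub]
    · rw [if_neg hsi, if_neg hsj, esingle, Pi.single_eq_of_ne (fun h => hsi h.symm),
        Pi.single_eq_of_ne (fun h => hsj h.symm), map_zero, map_zero, sub_zero]

lemma homN_tau (i j : Fin r) (hij : i ≠ j) (k l : Fin r) (hkl : k ≠ l) :
    homN n i j (tau n k l) = 0 := by
  have hni : ((n i : ℤ) : ZMod (Npair n i j)) = -1 :=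
    intCast_zmod_neg_one_of_dvd _ (Npair_dvd_ai n i j)
  have hnj : ((n j : ℤ) : ZMod (Npair n i j)) = -1 :=
    intCast_zmod_neg_one_of_dvd _ (Npair_dvd_aj n i j)
  have hz : ∀ s : Fin r, s ≠ i → s ≠ j → ((n s : ℤ) : ZMod (Npair n i j)) = 0 := fun s h1 h2 =>
    intCast_zmod_zero_of_dvd _ (Npair_dvd_nk n i j s h1 h2)
  rw [tau, map_add, homN_esingle n i j hij, homN_esingle n i j hij]
  by_cases hki : k = i
  · rw [if_pos hki]
    by_cases hli : l = i
    · exact absurd (hki.trans hli.symm) hkl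
    · by_cases hlj : l = j
      · rw [if_neg hli, if_pos hlj, hki, hlj, hni, hnj]
        ring
      · rw [if_neg hli, if_neg hlj, hz l hli hlj, add_zero]
  · rw [if_neg hki]
    by_cases hkj : k = j
    · rw [if_pos hkj]
      by_cases hli : l = i
      · rw [if_pos hli, hli, hkj, hni, hnj]
        ring
      · by_cases hlj : l = j
        · exact absurd (hkj.trans hlj.symm) hkl
        · rw [if_neg hli, if_neg hlj, hz l hli hlj, neg_zero, add_zero]
    · rw [if_neg hkj, hz k hki hkj, zero_add]
      by_cases hli : l = i
      · rw [if_pos hli]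
      · by_cases hlj : l = j
        · rw [if_neg hli, if_pos hlj, neg_zero]
        · rw [if_neg hli, if_neg hlj]

lemma Npair_dvd_index (hn : ∀ i, n i ≠ -1) (i j : Fin r) (hij : i ≠ j) :
    Npair n i j ∣ (Hsub n).index := by
  have hker : Hsub n ≤ (homN n i j).ker := by
    rw [Hsub, AddSubgroup.closure_le]
    rintro x ⟨k, l, hkl, rfl⟩
    exact homN_tau n i j hij k l hkl
  haveI : NeZero (Npair n i j) := ⟨by
    intro h0
    have hd := Npair_dvd_ai n i j
    rw [h0] at hd
    have h1 := Nat.eq_zero_of_zero_dvd hd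
    exact hn i (by omega)⟩
  have hsurj : (homN n i j).range = ⊤ := by
    rw [eq_top_iff]
    intro y _
    refine ⟨esingle n i (y.val : ℤ), ?_⟩
    rw [homN_esingle n i j hij, if_pos rfl, Int.cast_natCast]
    exact ZMod.natCast_rightInverse y
  have hkeri : ((homN n i j).ker).index = Npair n i j := by
    rw [AddSubgroup.index_ker, hsurj, Nat.card_congr AddSubgroup.topEquiv.toEquiv,
      Nat.card_zmod]
  rw [← hkeri]
  exact AddSubgroup.index_dvd_of_le hker
/-! ### Coprimality of the moduli -/

lemma eq_one_of_dvd_consec (d : ℕ) (x : ℤ) (h1 : d ∣ x.natAbs) (h2 : d ∣ (x + 1).natAbs) :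
    d = 1 := by
  have hx : (d : ℤ) ∣ x :=
    (Int.natCast_dvd_natCast.mpr h1).trans (Int.natAbs_dvd.mpr dvd_rfl)
  have hx1 : (d : ℤ) ∣ x + 1 :=
    (Int.natCast_dvd_natCast.mpr h2).trans (Int.natAbs_dvd.mpr dvd_rfl)
  have h3 : (d : ℤ) ∣ 1 := by
    have h4 := dvd_sub hx1 hx
    simpa using h4
  have h5 : (d : ℤ) ∣ ((1 : ℕ) : ℤ) := by simpa using h3
  exact Nat.dvd_one.mp (Int.natCast_dvd_natCast.mp h5)

lemma Npair_coprime_sep (i j k l w : Fin r) (hw1 : w ≠ i) (hw2 : w ≠ j)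
    (hw : w = k ∨ w = l) : Nat.Coprime (Npair n i j) (Npair n k l) := by
  set d := Nat.gcd (Npair n i j) (Npair n k l) with hd
  have hdn : d ∣ (n w).natAbs :=
    (Nat.gcd_dvd_left _ _).trans (Npair_dvd_nk n i j w hw1 hw2)
  have hda : d ∣ (n w + 1).natAbs := by
    rcases hw with rfl | rfl
    · exact (Nat.gcd_dvd_right _ _).trans (Npair_dvd_ai n _ _)
    · exact (Nat.gcd_dvd_right _ _).trans (Npair_dvd_aj n _ _)
  exact eq_one_of_dvd_consec d (n w) hdn hda

lemma Npair_pairwise_coprime (p q : Fin r × Fin r) (hp : p.1 < p.2) (hq : q.1 < q.2)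
    (hpq : p ≠ q) : Nat.Coprime (Npair n p.1 p.2) (Npair n q.1 q.2) := by
  by_cases h1 : q.1 ≠ p.1 ∧ q.1 ≠ p.2
  · exact Npair_coprime_sep n p.1 p.2 q.1 q.2 q.1 h1.1 h1.2 (Or.inl rfl)
  · by_cases h2 : q.2 ≠ p.1 ∧ q.2 ≠ p.2
    · exact Npair_coprime_sep n p.1 p.2 q.1 q.2 q.2 h2.1 h2.2 (Or.inr rfl)
    · exfalso
      push_neg at h1 h2
      have e1 : (q.1 : ℕ) = (p.1 : ℕ) ∨ (q.1 : ℕ) = (p.2 : ℕ) := by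
        by_cases hc : q.1 = p.1
        · exact Or.inl (congrArg Fin.val hc)
        · exact Or.inr (congrArg Fin.val (h1 hc))
      have e2 : (q.2 : ℕ) = (p.1 : ℕ) ∨ (q.2 : ℕ) = (p.2 : ℕ) := by
        by_cases hc : q.2 = p.1
        · exact Or.inl (congrArg Fin.val hc)
        · exact Or.inr (congrArg Fin.val (h2 hc))
      have hne : ¬((p.1 : ℕ) = (q.1 : ℕ) ∧ (p.2 : ℕ) = (q.2 : ℕ)) := by
        rintro ⟨u, v⟩
        exact hpq (Prod.ext (Fin.ext u) (Fin.ext v))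
      have hp' : (p.1 : ℕ) < (p.2 : ℕ) := hp
      have hq' : (q.1 : ℕ) < (q.2 : ℕ) := hq
      omega

lemma coprime_two_Npair (hodd : 3 ≤ (Finset.univ.filter fun i => Odd (n i)).card)
    (i j : Fin r) : Nat.Coprime 2 (Npair n i j) := by
  rw [Nat.Prime.coprime_iff_not_dvd Nat.prime_two]
  intro h2
  have hsub : (Finset.univ.filter fun k => Odd (n k)) ⊆ {i, j} := by
    intro k hk
    have hkodd : Odd (n k) := (Finset.mem_filter.mp hk).2
    by_contra hk'
    have hki : k ≠ i := fun h => hk' (by rw [h]; exact Finset.mem_insert_self _ _)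
    have hkj : k ≠ j := fun h => hk' (by
      rw [h]; exact Finset.mem_insert_of_mem (Finset.mem_singleton_self _))
    have hdvd : 2 ∣ (n k).natAbs := h2.trans (Npair_dvd_nk n i j k hki hkj)
    obtain ⟨c, hc⟩ := hkodd
    omega
  have hle := Finset.card_le_card hsub
  have : ({i, j} : Finset (Fin r)).card ≤ 2 :=
    (Finset.card_insert_le _ _).trans (by simp)
  omega

lemma prod_coprime_dvd {ι : Type*} (s : Finset ι) (f : ι → ℕ) (m : ℕ)
    (hco : ∀ a ∈ s, ∀ b ∈ s, a ≠ b → Nat.Coprime (f a) (f b))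
    (hdvd : ∀ a ∈ s, f a ∣ m) : ∏ a ∈ s, f a ∣ m := by
  induction s using Finset.cons_induction with
  | empty => simpa using one_dvd m
  | cons a s ha ih =>
    rw [Finset.prod_cons]
    have hcop : Nat.Coprime (f a) (∏ b ∈ s, f b) :=
      Nat.Coprime.prod_right fun b hb =>
        hco a (Finset.mem_cons_self a s) b (Finset.mem_cons_of_mem hb)
          (fun h => ha (h ▸ hb))
    exact hcop.mul_dvd_of_dvd_of_dvd (hdvd a (Finset.mem_cons_self a s))
      (ih (fun x hx y hy hxy => hco x (Finset.mem_cons_of_mem hx) y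
        (Finset.mem_cons_of_mem hy) hxy) (fun x hx => hdvd x (Finset.mem_cons_of_mem hx)))

lemma part1 (hn : ∀ i, n i ≠ -1)
    (hodd : 3 ≤ (Finset.univ.filter fun i => Odd (n i)).card) :
    2 * ∏ p ∈ Finset.univ.filter (fun p : Fin r × Fin r => p.1 < p.2), Npair n p.1 p.2
      ∣ (Hsub n).index := by
  set P := Finset.univ.filter (fun p : Fin r × Fin r => p.1 < p.2) with hP
  have hNdvd : ∀ p ∈ P, Npair n p.1 p.2 ∣ (Hsub n).index := by
    intro p hp
    have hlt : p.1 < p.2 := (Finset.mem_filter.mp hp).2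
    exact Npair_dvd_index n hn p.1 p.2 (Fin.ne_of_lt hlt)
  have hprod : ∏ p ∈ P, Npair n p.1 p.2 ∣ (Hsub n).index := by
    refine prod_coprime_dvd P _ _ ?_ hNdvd
    intro a ha b hb hab
    exact Npair_pairwise_coprime n a b (Finset.mem_filter.mp ha).2
      (Finset.mem_filter.mp hb).2 hab
  have hcop2 : Nat.Coprime 2 (∏ p ∈ P, Npair n p.1 p.2) :=
    Nat.Coprime.prod_right fun p _ => coprime_two_Npair n hodd p.1 p.2
  exact hcop2.mul_dvd_of_dvd_of_dvd (two_dvd_index n hodd) hprod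
/-! ### Part 2b : the product of the `cF` divides `2 * ∏ Npair` -/

lemma Npair_ne_zero (hn : ∀ i, n i ≠ -1) (i j : Fin r) : Npair n i j ≠ 0 := by
  intro h0
  have hd := Npair_dvd_ai n i j
  rw [h0] at hd
  have h1 := Nat.eq_zero_of_zero_dvd hd
  exact hn i (by omega)

set_option maxHeartbeats 2000000 in
lemma part2b (hn : ∀ i, n i ≠ -1) (hsum : ∑ i, n i = -2)
    (hodd : 3 ≤ (Finset.univ.filter fun i => Odd (n i)).card) :
    ∏ t : Fin r, cF n t ∣
      2 * ∏ q ∈ Finset.univ.filter (fun q : Fin r × Fin r => q.1 < q.2), Npair n q.1 q.2 := by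
  set M := 2 * ∏ q ∈ Finset.univ.filter (fun q : Fin r × Fin r => q.1 < q.2), Npair n q.1 q.2
    with hMdef
  have hMne : M ≠ 0 :=
    Nat.mul_ne_zero two_ne_zero
      (Finset.prod_ne_zero_iff.mpr fun q _ => Npair_ne_zero n hn q.1 q.2)
  have hCne : ∏ t : Fin r, cF n t ≠ 0 :=
    Finset.prod_ne_zero_iff.mpr fun t _ => cF_ne_zero n hn t
  rw [← Nat.factorization_le_iff_dvd hCne hMne, Finsupp.le_def]
  intro p
  by_cases hp : p.Prime
  swap
  · rw [Nat.factorization_eq_zero_of_not_prime _ hp]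
    exact Nat.zero_le _
  have hfac : (∏ t : Fin r, cF n t).factorization p
      = ∑ t : Fin r, (cF n t).factorization p := by
    rw [Nat.factorization_prod (fun t _ => cF_ne_zero n hn t)]
    exact Finset.sum_apply' p
  rw [hfac]
  set S := Finset.univ.filter (fun i : Fin r => p ∣ (n i + 1).natAbs) with hSdef
  have hmemS : ∀ i, i ∈ S ↔ p ∣ (n i + 1).natAbs := fun i => by
    rw [hSdef, Finset.mem_filter]
    exact ⟨fun h => h.2, fun h => ⟨Finset.mem_univ i, h⟩⟩
  have fact1 : ∀ i, i ∈ S → ¬ p ∣ (n i).natAbs := by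
    intro i hi hdvd
    have h1 := eq_one_of_dvd_consec p (n i) hdvd ((hmemS i).mp hi)
    have := hp.one_lt
    omega
  have factA : ∀ t : Fin r, t ∉ S → (cF n t).factorization p = 0 := by
    intro t ht
    apply Nat.factorization_eq_zero_of_not_dvd
    intro hd
    exact ht ((hmemS t).mpr (hd.trans (cF_dvd_a n t)))
  have hcop : ∀ i (w : ℕ), i ∈ S → Nat.Coprime (p ^ w) ((n i).natAbs) := fun i w hi =>
    Nat.Coprime.pow_left _ ((Nat.Prime.coprime_iff_not_dvd hp).mpr (fact1 i hi))
  have hcopA : ∀ k (w : ℕ), k ∉ S → Nat.Coprime (p ^ w) ((n k + 1).natAbs) := fun k w hk =>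
    Nat.Coprime.pow_left _ ((Nat.Prime.coprime_iff_not_dvd hp).mpr
      (fun hd => hk ((hmemS k).mpr hd)))
  by_cases h3 : 3 ≤ S.card
  · -- at least three indices: only the max of S contributes, bounded by v_p(2)
    have hSne : S.Nonempty := Finset.card_pos.mp (by omega)
    set m := S.max' hSne with hm
    have hmS : m ∈ S := S.max'_mem hSne
    have hzero : ∀ t : Fin r, t ≠ m → (cF n t).factorization p = 0 := by
      intro t htm
      by_cases htS : t ∈ S
      · apply Nat.factorization_eq_zero_of_not_dvd
        intro hd
        have hlt : (t : ℕ) < (m : ℕ) := by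
          have hle : (t : ℕ) ≤ (m : ℕ) := S.le_max' t htS
          have hne : (t : ℕ) ≠ (m : ℕ) := fun h => htm (Fin.ext h)
          omega
        exact fact1 m hmS (hd.trans (cF_dvd_nj n t m hlt))
      · exact factA t htS
    rw [Finset.sum_eq_single m (fun t _ ht => hzero t ht)
      (fun h => absurd (Finset.mem_univ m) h)]
    have h2' : 1 < (S.erase m).card := by
      have := Finset.card_erase_of_mem hmS
      omega
    obtain ⟨s, hs, s', hs', hss⟩ := Finset.one_lt_card.mp h2'
    have hsS : s ∈ S := Finset.mem_of_mem_erase hs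
    have hs'S : s' ∈ S := Finset.mem_of_mem_erase hs'
    have hsm : s ≠ m := Finset.ne_of_mem_erase hs
    have hs'm : s' ≠ m := Finset.ne_of_mem_erase hs'
    set w := (cF n m).factorization p with hw
    have hpw : p ^ w ∣ cF n m := Nat.ordProj_dvd _ _
    have hcd : cF n m ∣ (2 * n s * n s').natAbs := cF_dvd_2nn n m s s' hss hsm hs'm
    have hna : (2 * n s * n s').natAbs = 2 * (n s).natAbs * (n s').natAbs := by
      rw [Int.natAbs_mul, Int.natAbs_mul]
      rfl
    have hp2 : p ^ w ∣ 2 := by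
      have h1 : p ^ w ∣ 2 * (n s).natAbs * (n s').natAbs := by
        rw [← hna]
        exact hpw.trans hcd
      have h2 : p ^ w ∣ 2 * (n s).natAbs := (hcop s' w hs'S).dvd_of_dvd_mul_right h1
      exact (hcop s w hsS).dvd_of_dvd_mul_right h2
    have hdM : p ^ w ∣ M := hp2.trans (Dvd.intro _ rfl)
    exact (Nat.Prime.pow_dvd_iff_le_factorization hp hMne).mp hdM
  · by_cases hc2 : S.card = 2
    · -- exactly two indices i < j
      obtain ⟨a, b, hab, hSab⟩ := Finset.card_eq_two.mp hc2
      have habv : (a : ℕ) ≠ (b : ℕ) := fun h => hab (Fin.ext h)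
      obtain ⟨i, j, hij, hSij⟩ : ∃ i j : Fin r, (i : ℕ) < (j : ℕ) ∧ S = {i, j} := by
        rcases habv.lt_or_gt with h | h
        · exact ⟨a, b, h, hSab⟩
        · exact ⟨b, a, h, by rw [hSab, Finset.pair_comm]⟩
      have hijne : i ≠ j := fun h => by rw [h] at hij; omega
      have hiS : i ∈ S := by rw [hSij]; exact Finset.mem_insert_self _ _
      have hjS : j ∈ S := by
        rw [hSij]; exact Finset.mem_insert_of_mem (Finset.mem_singleton_self _)
      have hnotS : ∀ k, k ≠ i → k ≠ j → k ∉ S := by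
        intro k h1 h2 hk
        rw [hSij, Finset.mem_insert, Finset.mem_singleton] at hk
        tauto
      have hzero : ∀ t : Fin r, t ≠ j → (cF n t).factorization p = 0 := by
        intro t htj
        by_cases htS : t ∈ S
        · have hti : t = i := by
            rw [hSij, Finset.mem_insert, Finset.mem_singleton] at htS
            tauto
          subst hti
          apply Nat.factorization_eq_zero_of_not_dvd
          intro hd
          exact fact1 j hjS (hd.trans (cF_dvd_nj n t j hij))
        · exact factA t htS
      rw [Finset.sum_eq_single j (fun t _ ht => hzero t ht)
        (fun h => absurd (Finset.mem_univ j) h)]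
      set w := (cF n j).factorization p with hw
      have hpw : p ^ w ∣ cF n j := Nat.ordProj_dvd _ _
      have hNd : p ^ w ∣ Npair n i j := by
        refine Nat.dvd_gcd (Finset.dvd_gcd ?_) (Nat.dvd_gcd ?_ (hpw.trans (cF_dvd_a n j)))
        · intro k hk
          rw [Finset.mem_sdiff, Finset.mem_insert, Finset.mem_singleton] at hk
          have hki : k ≠ i := fun h => hk.2 (Or.inl h)
          have hkj : k ≠ j := fun h => hk.2 (Or.inr h)
          have hdk : cF n j ∣ ((n k + 1) * n k).natAbs := cF_dvd_an n j k hkj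
          rw [Int.natAbs_mul] at hdk
          exact (hcopA k w (hnotS k hki hkj)).dvd_of_dvd_mul_left (hpw.trans hdk)
        · have hdi : cF n j ∣ ((n i + 1) * n i).natAbs := cF_dvd_an n j i hijne
          rw [Int.natAbs_mul] at hdi
          exact (hcop i w hiS).dvd_of_dvd_mul_right (hpw.trans hdi)
      have hmemP : (i, j) ∈ Finset.univ.filter (fun q : Fin r × Fin r => q.1 < q.2) :=
        Finset.mem_filter.mpr ⟨Finset.mem_univ _, hij⟩
      have hdM : p ^ w ∣ M := by
        refine hNd.trans (dvd_mul_of_dvd_right ?_ 2)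
        exact Finset.dvd_prod_of_mem (fun q : Fin r × Fin r => Npair n q.1 q.2) hmemP
      exact (Nat.Prime.pow_dvd_iff_le_factorization hp hMne).mp hdM
    · by_cases hc1 : S.card = 1
      · -- exactly one index s : use the sum hypothesis
        obtain ⟨s, hSs⟩ := Finset.card_eq_one.mp hc1
        have hsS : s ∈ S := by rw [hSs]; exact Finset.mem_singleton_self s
        have hex : ∃ k, k ≠ s ∧ ¬ p ∣ (n k).natAbs := by
          by_contra hcon
          push_neg at hcon
          have hdvdsum : (p : ℤ) ∣ ∑ k ∈ Finset.univ.erase s, n k :=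
            Finset.dvd_sum fun k hk =>
              (Int.natCast_dvd_natCast.mpr (hcon k (Finset.mem_erase.mp hk).1)).trans
                (Int.natAbs_dvd.mpr dvd_rfl)
          have hsumerase : n s + ∑ k ∈ Finset.univ.erase s, n k = -2 := by
            rw [Finset.add_sum_erase _ _ (Finset.mem_univ s)]
            exact hsum
          have hps : (p : ℤ) ∣ n s + 1 :=
            (Int.natCast_dvd_natCast.mpr ((hmemS s).mp hsS)).trans (Int.natAbs_dvd.mpr dvd_rfl)
          have hone : (p : ℤ) ∣ (n s + 1) + ∑ k ∈ Finset.univ.erase s, n k :=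
            dvd_add hps hdvdsum
          have heq : (n s + 1) + ∑ k ∈ Finset.univ.erase s, n k = -1 := by linarith
          rw [heq] at hone
          have hp1 : (p : ℤ) ∣ 1 := (dvd_neg (α := ℤ)).mp (by simpa using hone)
          have hp1' : p ∣ 1 := Int.natCast_dvd_natCast.mp (by simpa using hp1)
          have hpe := Nat.dvd_one.mp hp1'
          have := hp.one_lt
          omega
        obtain ⟨k, hks, hknd⟩ := hex
        have hkS : k ∉ S := by
          rw [hSs, Finset.mem_singleton]
          exact hks
        have hzero : ∀ t : Fin r, (cF n t).factorization p = 0 := by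
          intro t
          by_cases hts : t = s
          · subst hts
            apply Nat.factorization_eq_zero_of_not_dvd
            intro hd
            have hdk : cF n t ∣ ((n k + 1) * n k).natAbs := cF_dvd_an n t k hks
            rw [Int.natAbs_mul] at hdk
            rcases (Nat.Prime.dvd_mul hp).mp (hd.trans hdk) with h | h
            · exact hkS ((hmemS k).mpr h)
            · exact hknd h
          · exact factA t (by rw [hSs, Finset.mem_singleton]; exact hts)
        rw [Finset.sum_eq_zero fun t _ => hzero t]
        exact Nat.zero_le _
      · -- S empty
        have hc0 : S.card = 0 := by omega
        have hzero : ∀ t : Fin r, (cF n t).factorization p = 0 := fun t =>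
          factA t (by rw [Finset.card_eq_zero.mp hc0]; exact Finset.notMem_empty t)
        rw [Finset.sum_eq_zero fun t _ => hzero t]
        exact Nat.zero_le _
end HsubAux

/-- If no `n i` equals `-1`, `∑ n i = -2` and at least three indices `i` have `n i` odd,
then the index of `H` in `G` equals `2 * ∏_{i < j} N i j`. -/
theorem Hsub_index_eq_two_mul_prod {r : ℕ} (n : Fin r → ℤ)
    (hn : ∀ i, n i ≠ -1) (hsum : ∑ i, n i = -2)
    (hodd : 3 ≤ (Finset.univ.filter fun i => Odd (n i)).card) :
    (Hsub n).index =
      2 * ∏ p ∈ Finset.univ.filter (fun p : Fin r × Fin r => p.1 < p.2), Npair n p.1 p.2 := by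
  apply Nat.dvd_antisymm
  · have h2a := HsubAux.index_dvd_prod_cF n hn
    have h2b := HsubAux.part2b n hn hsum hodd
    have heq : ∏ t ∈ Finset.range r, HsubAux.cFnat n t = ∏ t : Fin r, HsubAux.cF n t := by
      rw [← Fin.prod_univ_eq_prod_range]
      apply Finset.prod_congr rfl
      intro t _
      simp [HsubAux.cFnat]
    rw [heq] at h2a
    exact h2a.trans h2b
  · exact HsubAux.part1 n hn hodd
end

section
/- For all integers p ≥ 2 and q ≥ 1, the circle integral ∮ z in C(0, 1/2), 1/(z^p · (1 − z)^q) over the circle of center 0 and radius 1/2 in ℂ equals 2·π·I·(Nat.choose (p + q − 2) (p − 1)); in particular, this circle integral is nonzero. -/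
/-! Since `1 = (1 - z) + z`, the integrand with exponents `(a + 1, b + 1)` splits into those with
exponents `(a, b + 1)` and `(a + 1, b)`, so the integrals obey Pascal's rule. The boundary values
come from the Cauchy integral formula (`a = 0`) and from `∮ z⁻ⁿ = 0` for `n ≥ 2` (`b = 0`). -/

open Complex Metric

section

variable {R : ℝ}

lemma one_sub_ne_zero_of_mem_closedBall (hR : R < 1) {z : ℂ} (hz : z ∈ closedBall (0 : ℂ) R) :
    1 - z ≠ 0 := by
  rw [mem_closedBall_zero_iff] at hz
  rintro h
  rw [← sub_eq_zero.1 h, norm_one] at hz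
  linarith

lemma circleIntegrable_one_div_pow_mul_one_sub_pow (hR0 : 0 < R) (hR1 : R < 1) (a b : ℕ) :
    CircleIntegrable (fun z : ℂ => 1 / (z ^ a * (1 - z) ^ b)) 0 R := by
  refine ContinuousOn.circleIntegrable hR0.le (continuousOn_const.div (by fun_prop) ?_)
  intro z hz
  have hz0 : z ≠ 0 := ne_of_mem_sphere hz hR0.ne'
  have hz1 := one_sub_ne_zero_of_mem_closedBall hR1 (sphere_subset_closedBall hz)
  exact mul_ne_zero (pow_ne_zero _ hz0) (pow_ne_zero _ hz1)

lemma circleIntegral_one_div_mul_one_sub_pow (hR0 : 0 < R) (hR1 : R < 1) (b : ℕ) :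
    (∮ z in C((0 : ℂ), R), 1 / (z * (1 - z) ^ b)) = 2 * Real.pi * I := by
  have hd : DifferentiableOn ℂ (fun z : ℂ => ((1 - z) ^ b)⁻¹) (closedBall 0 R) := fun z hz =>
    ((differentiableAt_id.const_sub 1).pow b).inv
      (pow_ne_zero _ (one_sub_ne_zero_of_mem_closedBall hR1 hz)) |>.differentiableWithinAt
  have hcauchy := hd.circleIntegral_sub_inv_smul (mem_ball_self hR0)
  simp only [sub_zero, smul_eq_mul, one_pow, inv_one, mul_one] at hcauchy
  rw [← hcauchy]
  refine circleIntegral.integral_congr hR0.le fun z _ => ?_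
  simp [mul_comm]

end

lemma circleIntegral_inv_sub_pow_eq_zero {n : ℕ} (hn : n ≠ 1) (c w : ℂ) (R : ℝ) :
    (∮ z in C(c, R), ((z - w) ^ n)⁻¹) = 0 := by
  have hn' : -(n : ℤ) ≠ -1 := by omega
  simpa [zpow_neg] using circleIntegral.integral_sub_zpow_of_ne hn' c w R

lemma one_div_pow_succ_mul_one_sub_pow_succ {z : ℂ} (hz0 : z ≠ 0) (hz1 : 1 - z ≠ 0) (a b : ℕ) :
    1 / (z ^ (a + 1) * (1 - z) ^ (b + 1)) =
      1 / (z ^ a * (1 - z) ^ (b + 1)) + 1 / (z ^ (a + 1) * (1 - z) ^ b) := by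
  field_simp
  ring

theorem circleIntegral_one_div_pow_succ_mul_one_sub_pow {R : ℝ} (hR0 : 0 < R) (hR1 : R < 1)
    (a b : ℕ) :
    (∮ z in C((0 : ℂ), R), 1 / (z ^ (a + 1) * (1 - z) ^ b)) =
      2 * Real.pi * I * ((a + b - 1).choose a : ℂ) := by
  induction a generalizing b with
  | zero => simpa using circleIntegral_one_div_mul_one_sub_pow hR0 hR1 b
  | succ a iha =>
    induction b with
    | zero =>
      have hchoose : (a + 1 + 0 - 1).choose (a + 1) = 0 := Nat.choose_eq_zero_of_lt (by omega)
      simpa [hchoose] using circleIntegral_inv_sub_pow_eq_zero (n := a + 2) (by omega) 0 0 R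
    | succ b ihb =>
      have hsplit : (∮ z in C((0 : ℂ), R), 1 / (z ^ (a + 1 + 1) * (1 - z) ^ (b + 1))) =
          ∮ z in C((0 : ℂ), R),
            1 / (z ^ (a + 1) * (1 - z) ^ (b + 1)) + 1 / (z ^ (a + 1 + 1) * (1 - z) ^ b) :=
        circleIntegral.integral_congr hR0.le fun z hz =>
          one_div_pow_succ_mul_one_sub_pow_succ (ne_of_mem_sphere hz hR0.ne')
            (one_sub_ne_zero_of_mem_closedBall hR1 (sphere_subset_closedBall hz)) _ _
      have hpascal : (a + (b + 1) - 1).choose a + (a + 1 + b - 1).choose (a + 1) =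
          (a + 1 + (b + 1) - 1).choose (a + 1) := by
        rw [show a + (b + 1) - 1 = a + b by omega, show a + 1 + b - 1 = a + b by omega,
          show a + 1 + (b + 1) - 1 = a + b + 1 by omega, Nat.choose_succ_succ]
      have hint := circleIntegrable_one_div_pow_mul_one_sub_pow hR0 hR1
      rw [hsplit, circleIntegral.integral_add (hint _ _) (hint _ _), iha (b + 1), ihb, ← hpascal]
      push_cast
      ring

/-- For integers `p ≥ 2` and `q ≥ 1`, the integral of `1 / (z^p * (1 - z)^q)` over the circle
of center `0` and radius `1/2` equals `2 * π * I * (p + q - 2).choose (p - 1)`; in particular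
it is nonzero. This is the residue computation showing that a meromorphic one-form on the
Riemann sphere with exactly two poles and one zero has nonzero residue at each pole. -/
theorem circleIntegral_two_poles_one_zero (p q : ℕ) (hp : 2 ≤ p) (hq : 1 ≤ q) :
    (∮ z in C((0 : ℂ), 1/2), 1 / (z ^ p * (1 - z) ^ q)) =
        2 * Real.pi * I * ((p + q - 2).choose (p - 1) : ℂ) ∧
      (∮ z in C((0 : ℂ), 1/2), 1 / (z ^ p * (1 - z) ^ q)) ≠ 0 := by
  obtain ⟨a, rfl⟩ : ∃ a, p = a + 1 := ⟨p - 1, by omega⟩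
  have hformula := circleIntegral_one_div_pow_succ_mul_one_sub_pow (R := 1/2)
    (by norm_num) (by norm_num) a q
  rw [show a + 1 + q - 2 = a + q - 1 by omega, Nat.add_sub_cancel]
  refine ⟨hformula, hformula ▸ ?_⟩
  have hchoose : (a + q - 1).choose a ≠ 0 := (Nat.choose_pos (by omega)).ne'
  simp [Real.pi_ne_zero, I_ne_zero, hchoose]
end
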